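/- arXiv:math/0202306 — 6 statements merged into one kernel-verified Lean document; each statement's English description precedes it below -/
import Mathlib

section
/- Let A be a Banach algebra and let (G, 𝔄) be a Gelfand theory for A. Then for every a ∈ A, the element G(a) is quasi-invertible in the subalgebra G(A) if and only if G(a) is quasi-invertible in 𝔄. -/
open scoped Pointwise

/-- A `ℂ`-submodule `L` of a (possibly non-unital) algebra `A` is a left ideal if it is
closed under left multiplication by arbitrary elements of `A`. -/
def IsLeftIdeal {A : Type*} [NonUnitalNonAssocRing A] [Module ℂ A]
    (L : Submodule ℂ A) : Prop :=
  ∀ a : A, ∀ x ∈ L, a * x ∈ L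

/-- A left ideal `L` is modular if there is a right modular identity `u`,
i.e. `a * u - a ∈ L` for all `a`. -/
def IsModularLeft {A : Type*} [NonUnitalNonAssocRing A] [Module ℂ A]
    (L : Submodule ℂ A) : Prop :=
  ∃ u : A, ∀ a : A, a * u - a ∈ L

/-- `L` is a maximal modular left ideal: a proper modular left ideal which is maximal among
proper left ideals. -/
def IsMaximalModularLeftIdeal {A : Type*} [NonUnitalNonAssocRing A] [Module ℂ A]
    (L : Submodule ℂ A) : Prop :=
  IsLeftIdeal L ∧ IsModularLeft L ∧ L ≠ ⊤ ∧
    ∀ M : Submodule ℂ A, IsLeftIdeal M → M ≠ ⊤ → L ≤ M → M = L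

/-- `(G, 𝔄)` is a Gelfand theory for `A`:
(G1) `𝔄` is a C*-algebra and `G : A → 𝔄` is an algebra homomorphism;
(G2) `L ↦ G⁻¹(L)` is a bijection between the maximal modular left ideals of `𝔄` and of `A`;
(G3) for each maximal modular left ideal `L` of `𝔄`, the induced map `A/G⁻¹(L) → 𝔄/L` has
dense range; equivalently (via the open quotient map `𝔄 → 𝔄/L`), the set `G(A) + L` is
dense in `𝔄`. -/
def IsGelfandTheory {A 𝔄 : Type*}
    [NonUnitalNormedRing A] [NormedSpace ℂ A] [IsScalarTower ℂ A A] [SMulCommClass ℂ A A]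
    [NonUnitalNormedRing 𝔄] [StarRing 𝔄] [CStarRing 𝔄] [NormedSpace ℂ 𝔄]
    [IsScalarTower ℂ 𝔄 𝔄] [SMulCommClass ℂ 𝔄 𝔄] [StarModule ℂ 𝔄] [CompleteSpace 𝔄]
    (G : A →ₙₐ[ℂ] 𝔄) : Prop :=
  Set.BijOn (fun L : Submodule ℂ 𝔄 => L.comap (G : A →ₗ[ℂ] 𝔄))
      {L | IsMaximalModularLeftIdeal L} {L | IsMaximalModularLeftIdeal L} ∧
    ∀ L : Submodule ℂ 𝔄, IsMaximalModularLeftIdeal L →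
      Dense (Set.range ⇑G + (L : Set 𝔄))

section Aux

set_option linter.unusedSectionVars false

variable {𝔄 : Type*} [NonUnitalNormedRing 𝔄] [NormedSpace ℂ 𝔄]
    [IsScalarTower ℂ 𝔄 𝔄] [SMulCommClass ℂ 𝔄 𝔄]

/-- Right multiplication by a fixed element, as a `ℂ`-linear map on the unitization. -/
noncomputable def rmulW (s : Unitization ℂ 𝔄) : Unitization ℂ 𝔄 →ₗ[ℂ] Unitization ℂ 𝔄 where
  toFun z := z * s
  map_add' a b := add_mul a b s
  map_smul' c z := by
    ext
    · simp [mul_assoc]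
    · simp [smul_add, smul_mul_assoc, mul_smul_comm, smul_smul, mul_comm]

theorem rmulW_apply (s z : Unitization ℂ 𝔄) : rmulW s z = z * s := rfl

theorem mul_inr_eq (z : Unitization ℂ 𝔄) (w : 𝔄) :
    z * (w : Unitization ℂ 𝔄) = ((z.fst • w + z.snd * w : 𝔄) : Unitization ℂ 𝔄) := by
  ext <;> simp

theorem decompW (z : Unitization ℂ 𝔄) :
    z = z.fst • 1 + (z.snd : Unitization ℂ 𝔄) := by
  ext <;> simp

theorem fstW_sub (z w : Unitization ℂ 𝔄) : (z - w).fst = z.fst - w.fst := rfl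

theorem sndW_sub (z w : Unitization ℂ 𝔄) : (z - w).snd = z.snd - w.snd := rfl

theorem mulW_smul (μ : ℂ) (z v : Unitization ℂ 𝔄) : z * (μ • v) = μ • (z * v) := by
  ext
  · simp; ring
  · simp [smul_add, smul_smul, mul_smul_comm, mul_comm, smul_comm μ]

end Aux

/-- Key lemma: if `G x` is quasi-invertible in `𝔄`, then `x` has a left quasi-inverse in `A`. -/
theorem gelfand_left_qi {A 𝔄 : Type*}
    [NonUnitalNormedRing A] [NormedSpace ℂ A] [IsScalarTower ℂ A A] [SMulCommClass ℂ A A]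
    [NonUnitalNormedRing 𝔄] [StarRing 𝔄] [CStarRing 𝔄] [NormedSpace ℂ 𝔄]
    [IsScalarTower ℂ 𝔄 𝔄] [SMulCommClass ℂ 𝔄 𝔄] [StarModule ℂ 𝔄] [CompleteSpace 𝔄]
    (G : A →ₙₐ[ℂ] 𝔄) (hG : IsGelfandTheory G) (x : A) (y : 𝔄)
    (hy1 : G x + y - G x * y = 0) (hy2 : G x + y - y * G x = 0) :
    ∃ b : A, b * x - b = x := by
  by_contra hno
  push_neg at hno
  -- the modular left ideal J = { c*x - c : c ∈ A }
  set J : Submodule ℂ A := LinearMap.range (LinearMap.mulRight ℂ x - LinearMap.id) with hJ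
  have hJmem : ∀ c : A, c * x - c ∈ J := fun c => ⟨c, rfl⟩
  have hJmem' : ∀ z ∈ J, ∃ c : A, c * x - c = z := by
    rintro z ⟨c, rfl⟩; exact ⟨c, rfl⟩
  have hxJ : x ∉ J := by
    intro hx
    obtain ⟨c, hc⟩ := hJmem' x hx
    exact hno c hc
  have htop : ∀ N : Submodule ℂ A, IsLeftIdeal N → J ≤ N → x ∈ N → N = ⊤ := by
    intro N hN hJN hxN
    rw [Submodule.eq_top_iff']
    intro c
    have h1 : c * x ∈ N := hN c x hxN
    have h2 : c * x - c ∈ N := hJN (hJmem c)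
    have := N.sub_mem h1 h2
    rwa [sub_sub_cancel] at this
  -- Zorn
  set S : Set (Submodule ℂ A) := {I | IsLeftIdeal I ∧ x ∉ I ∧ J ≤ I} with hS
  have hJS : J ∈ S := by
    refine ⟨?_, hxJ, le_refl _⟩
    intro a z hz
    obtain ⟨c, rfl⟩ := hJmem' z hz
    have h : a * (c * x - c) = (a * c) * x - a * c := by
      rw [mul_sub, mul_assoc]
    rw [h]
    exact hJmem _
  obtain ⟨M, hJM, hMmax⟩ := zorn_le_nonempty₀ S (fun c hcS hc p hp => by
    refine ⟨sSup c, ⟨?_, ?_, ?_⟩, fun z hz => le_sSup hz⟩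
    · intro a z hz
      obtain ⟨q, hq, hzq⟩ := (Submodule.mem_sSup_of_directed ⟨p, hp⟩ hc.directedOn).1 hz
      exact le_sSup hq ((hcS hq).1 a z hzq)
    · intro hx
      obtain ⟨q, hq, hxq⟩ := (Submodule.mem_sSup_of_directed ⟨p, hp⟩ hc.directedOn).1 hx
      exact (hcS hq).2.1 hxq
    · exact le_trans (hcS hp).2.2 (le_sSup hp)) J hJS
  have hMli : IsLeftIdeal M := hMmax.1.1
  have hxM : x ∉ M := hMmax.1.2.1
  have hJleM : J ≤ M := hMmax.1.2.2
  have hMm : IsMaximalModularLeftIdeal M := by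
    refine ⟨hMli, ⟨x, fun c => hJleM (hJmem c)⟩, ?_, ?_⟩
    · intro h; exact hxM (h ▸ Submodule.mem_top)
    · intro N hN hNtop hMN
      have hxN : x ∉ N := fun hxN => hNtop (htop N hN (le_trans hJleM hMN) hxN)
      exact le_antisymm (hMmax.2 ⟨hN, hxN, le_trans hJleM hMN⟩ hMN) hMN
  -- pull back via the bijection
  obtain ⟨L, hLm, hfL⟩ := hG.1.2.2 hMm
  simp only at hfL
  have hLli : IsLeftIdeal L := hLm.1
  obtain ⟨u, hu⟩ := hLm.2.1
  have hLtop : L ≠ ⊤ := hLm.2.2.1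
  have hLmax := hLm.2.2.2
  have huL : u ∉ L := by
    intro huL
    apply hLtop
    rw [Submodule.eq_top_iff']
    intro z
    have h1 : z * u ∈ L := hLli z u huL
    have h2 : z * u - z ∈ L := hu z
    have := L.sub_mem h1 h2
    rwa [sub_sub_cancel] at this
  -- move to the unitization
  set s : Unitization ℂ 𝔄 := 1 - (G x : Unitization ℂ 𝔄) with hs
  set t : Unitization ℂ 𝔄 := 1 - (y : Unitization ℂ 𝔄) with ht
  have hxy : G x * y = G x + y := by
    have := hy1; rwa [sub_eq_zero, eq_comm] at this
  have hyx : y * G x = G x + y := by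
    have := hy2; rwa [sub_eq_zero, eq_comm] at this
  have hst : s * t = 1 := by
    have h : ((G x : Unitization ℂ 𝔄)) * (y : Unitization ℂ 𝔄)
        = ((G x : Unitization ℂ 𝔄)) + (y : Unitization ℂ 𝔄) := by
      rw [← Unitization.inr_mul, hxy, Unitization.inr_add]
    rw [hs, ht, one_sub_mul, mul_one_sub, h]
    abel
  have hts : t * s = 1 := by
    have h : ((y : Unitization ℂ 𝔄)) * (G x : Unitization ℂ 𝔄)
        = ((G x : Unitization ℂ 𝔄)) + (y : Unitization ℂ 𝔄) := by
      rw [← Unitization.inr_mul, hyx, Unitization.inr_add]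
    rw [hs, ht, one_sub_mul, mul_one_sub, h]
    abel
  set inrl : 𝔄 →ₗ[ℂ] Unitization ℂ 𝔄 := ((Unitization.inrNonUnitalAlgHom ℂ 𝔄) : 𝔄 →ₗ[ℂ] Unitization ℂ 𝔄)
    with hinrl
  have hinrl_apply : ∀ w : 𝔄, inrl w = (w : Unitization ℂ 𝔄) := fun _ => rfl
  -- Lhat = L + ℂ·(1 - u)
  set Lhat : Submodule ℂ (Unitization ℂ 𝔄) :=
    (L.map inrl) ⊔ (Submodule.span ℂ {(1 : Unitization ℂ 𝔄) - (u : Unitization ℂ 𝔄)}) with hLhat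
  have memLhat : ∀ z : Unitization ℂ 𝔄, z ∈ Lhat ↔
      ∃ l ∈ L, ∃ μ : ℂ, z = (l : Unitization ℂ 𝔄)
        + μ • ((1 : Unitization ℂ 𝔄) - (u : Unitization ℂ 𝔄)) := by
    intro z
    rw [hLhat, Submodule.mem_sup]
    constructor
    · rintro ⟨p, hp, q, hq, rfl⟩
      obtain ⟨l, hl, rfl⟩ := hp
      obtain ⟨μ, rfl⟩ := Submodule.mem_span_singleton.1 hq
      exact ⟨l, hl, μ, rfl⟩
    · rintro ⟨l, hl, μ, rfl⟩
      exact ⟨(l : Unitization ℂ 𝔄), ⟨l, hl, rfl⟩,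
        μ • ((1 : Unitization ℂ 𝔄) - (u : Unitization ℂ 𝔄)),
        Submodule.mem_span_singleton.2 ⟨μ, rfl⟩, rfl⟩
  have hinrLhat : ∀ l ∈ L, (l : Unitization ℂ 𝔄) ∈ Lhat := by
    intro l hl
    rw [memLhat]
    exact ⟨l, hl, 0, by simp⟩
  have honeu : (1 : Unitization ℂ 𝔄) - (u : Unitization ℂ 𝔄) ∈ Lhat := by
    rw [memLhat]
    exact ⟨0, L.zero_mem, 1, by simp⟩
  have hz1u : ∀ z : Unitization ℂ 𝔄,
      z * ((1 : Unitization ℂ 𝔄) - (u : Unitization ℂ 𝔄)) ∈ Lhat := by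
    intro z
    rw [memLhat]
    refine ⟨z.snd - z.snd * u, ?_, z.fst, ?_⟩
    · have := L.neg_mem (hu z.snd)
      rwa [neg_sub] at this
    · ext
      · simp [fstW_sub]
      · simp [sndW_sub, Unitization.snd_mul, fstW_sub, mul_sub, smul_sub]
        abel
  have hLhat_li : ∀ z w : Unitization ℂ 𝔄, w ∈ Lhat → z * w ∈ Lhat := by
    intro z w hw
    rw [memLhat] at hw
    obtain ⟨l, hl, μ, rfl⟩ := hw
    rw [mul_add, mulW_smul]
    refine Lhat.add_mem ?_ (Lhat.smul_mem μ (hz1u z))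
    rw [mul_inr_eq]
    exact hinrLhat _ (L.add_mem (L.smul_mem _ hl) (hLli _ _ hl))
  have hLhat_ne1 : (1 : Unitization ℂ 𝔄) ∉ Lhat := by
    intro h1
    rw [memLhat] at h1
    obtain ⟨l, hl, μ, hlμ⟩ := h1
    have hfst := congrArg Prod.fst (congrArg Unitization.toProd hlμ)
    simp only [Unitization.fst_one, Unitization.fst_add, Unitization.fst_inr, Unitization.fst_smul,
      fstW_sub, zero_add, smul_eq_mul, sub_zero, mul_one] at hfst
    rw [← hfst, one_smul] at hlμ
    have hsnd := congrArg Prod.snd (congrArg Unitization.toProd hlμ)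
    simp only [Unitization.snd_one, Unitization.snd_add, Unitization.snd_inr, sndW_sub,
      zero_sub] at hsnd
    -- hsnd : 0 = l + -u
    have h4 : l = u := by
      have h7 : l + -u = 0 := hsnd.symm
      have h8 := eq_neg_of_add_eq_zero_left h7
      rwa [neg_neg] at h8
    exact huL (h4 ▸ hl)
  -- maximality of Lhat
  have hLhat_max : ∀ N : Submodule ℂ (Unitization ℂ 𝔄),
      (∀ z w : Unitization ℂ 𝔄, w ∈ N → z * w ∈ N) → (1 : Unitization ℂ 𝔄) ∉ N →
      Lhat ≤ N → N = Lhat := by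
    intro N hNli hN1 hLN
    have h1u : (1 : Unitization ℂ 𝔄) - (u : Unitization ℂ 𝔄) ∈ N := hLN honeu
    set K : Submodule ℂ 𝔄 := N.comap inrl with hK
    have hKli : IsLeftIdeal K := by
      intro a w hw
      have h : ((a * w : 𝔄) : Unitization ℂ 𝔄) = (a : Unitization ℂ 𝔄) * (w : Unitization ℂ 𝔄) :=
        Unitization.inr_mul _ _ _
      show inrl (a * w) ∈ N
      rw [hinrl_apply, h]
      exact hNli _ _ hw
    have hLK : L ≤ K := fun l hl => hLN (hinrLhat l hl)
    have hKtop : K ≠ ⊤ := by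
      intro hKt
      have huK : (u : Unitization ℂ 𝔄) ∈ N := (hKt ▸ Submodule.mem_top : u ∈ K)
      have h5 : (1 : Unitization ℂ 𝔄) = ((1 : Unitization ℂ 𝔄) - (u : Unitization ℂ 𝔄))
          + (u : Unitization ℂ 𝔄) := by abel
      exact hN1 (h5 ▸ N.add_mem h1u huK)
    have hKL : K = L := hLmax K hKli hKtop hLK
    refine le_antisymm ?_ hLN
    intro n hn
    have hwn : ((n.snd + n.fst • u : 𝔄) : Unitization ℂ 𝔄)
        = n - n.fst • ((1 : Unitization ℂ 𝔄) - (u : Unitization ℂ 𝔄)) := by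
      ext
      · simp [fstW_sub]
      · simp [sndW_sub, smul_sub]
    have hmemN : ((n.snd + n.fst • u : 𝔄) : Unitization ℂ 𝔄) ∈ N := by
      rw [hwn]
      exact N.sub_mem hn (N.smul_mem _ h1u)
    have hmemL : n.snd + n.fst • u ∈ L := by
      rw [← hKL]
      exact hmemN
    rw [memLhat]
    refine ⟨n.snd + n.fst • u, hmemL, n.fst, ?_⟩
    rw [hwn]
    abel
  -- Λ = { z | z * s ∈ Lhat }
  set Lam : Submodule ℂ (Unitization ℂ 𝔄) := Lhat.comap (rmulW s) with hLamdef
  have memLam : ∀ z : Unitization ℂ 𝔄, z ∈ Lam ↔ z * s ∈ Lhat := fun z => Iff.rfl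
  have hLam_li : ∀ z w : Unitization ℂ 𝔄, w ∈ Lam → z * w ∈ Lam := by
    intro z w hw
    rw [memLam] at hw ⊢
    rw [mul_assoc]
    exact hLhat_li z _ hw
  have hLam_ne1 : (1 : Unitization ℂ 𝔄) ∉ Lam := by
    intro h1
    rw [memLam, one_mul] at h1
    exact hLhat_ne1 (hts ▸ hLhat_li t s h1)
  have hGLam : ∀ c : A, ((G c : 𝔄) : Unitization ℂ 𝔄) ∈ Lam := by
    intro c
    rw [memLam]
    have hcx : c * x - c ∈ M := hJleM (hJmem c)
    have hGL : G (c * x - c) ∈ L := by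
      rw [← hfL] at hcx
      exact hcx
    have hGc : G c - G c * G x ∈ L := by
      have h := L.neg_mem hGL
      rw [map_sub, map_mul, neg_sub] at h
      exact h
    have heq : (G c : Unitization ℂ 𝔄) * s = ((G c - G c * G x : 𝔄) : Unitization ℂ 𝔄) := by
      rw [hs, mul_one_sub, ← Unitization.inr_mul, ← Unitization.inr_sub]
    rw [heq]
    exact hinrLhat _ hGc
  -- maximality of Λ
  have hLam_max : ∀ N : Submodule ℂ (Unitization ℂ 𝔄),
      (∀ z w : Unitization ℂ 𝔄, w ∈ N → z * w ∈ N) → (1 : Unitization ℂ 𝔄) ∉ N →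
      Lam ≤ N → N = Lam := by
    intro N hNli hN1 hLamN
    set Ns : Submodule ℂ (Unitization ℂ 𝔄) := N.map (rmulW s) with hNs
    have memNs : ∀ z : Unitization ℂ 𝔄, z ∈ Ns ↔ ∃ n ∈ N, n * s = z := by
      intro z
      rw [hNs, Submodule.mem_map]
      constructor
      · rintro ⟨n, hn, rfl⟩; exact ⟨n, hn, rfl⟩
      · rintro ⟨n, hn, rfl⟩; exact ⟨n, hn, rfl⟩
    have hNs_li : ∀ z w : Unitization ℂ 𝔄, w ∈ Ns → z * w ∈ Ns := by
      intro z w hw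
      rw [memNs] at hw ⊢
      obtain ⟨n, hn, rfl⟩ := hw
      exact ⟨z * n, hNli z n hn, by rw [mul_assoc]⟩
    have hNs_ne1 : (1 : Unitization ℂ 𝔄) ∉ Ns := by
      intro h1
      rw [memNs] at h1
      obtain ⟨n, hn, hns⟩ := h1
      have hnt : n = t := by
        have h := congrArg (· * t) hns
        simp only [one_mul] at h
        rwa [mul_assoc, hst, mul_one] at h
      have htN : t ∈ N := by rw [← hnt]; exact hn
      have h1N : (1 : Unitization ℂ 𝔄) ∈ N := by
        rw [← hst]; exact hNli s t htN
      exact hN1 h1N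
    have hLhatNs : Lhat ≤ Ns := by
      intro w hw
      rw [memNs]
      refine ⟨w * t, hLamN ?_, by rw [mul_assoc, hts, mul_one]⟩
      rw [memLam, mul_assoc, hts, mul_one]
      exact hw
    have hNsLhat : Ns = Lhat := hLhat_max Ns hNs_li hNs_ne1 hLhatNs
    refine le_antisymm ?_ hLamN
    intro n hn
    rw [memLam, ← hNsLhat, memNs]
    exact ⟨n, hn, rfl⟩
  -- case split on whether 𝔄 ⊆ Λ
  by_cases hcase : ∀ w : 𝔄, (w : Unitization ℂ 𝔄) ∈ Lam
  · have hfst0 : ∀ z ∈ Lam, z.fst = 0 := by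
      intro z hz
      by_contra hzf
      have h1 : (z.snd : Unitization ℂ 𝔄) ∈ Lam := hcase z.snd
      have h2 : z.fst • (1 : Unitization ℂ 𝔄) ∈ Lam := by
        have hsub : z - (z.snd : Unitization ℂ 𝔄) = z.fst • (1 : Unitization ℂ 𝔄) := by
          nth_rewrite 1 [decompW z]; abel
        rw [← hsub]
        exact Lam.sub_mem hz h1
      have h3 : (1 : Unitization ℂ 𝔄) ∈ Lam := by
        have h := Lam.smul_mem z.fst⁻¹ h2
        rwa [smul_smul, inv_mul_cancel₀ hzf, one_smul] at h
      exact hLam_ne1 h3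
    have hzeta : ((1 : Unitization ℂ 𝔄) - (u : Unitization ℂ 𝔄)) * t ∈ Lam := by
      rw [memLam, mul_assoc, hts, mul_one]
      exact honeu
    have h := hfst0 _ hzeta
    rw [Unitization.fst_mul] at h
    simp only [ht, fstW_sub, Unitization.fst_one, Unitization.fst_inr, sub_zero, mul_one] at h
    exact one_ne_zero h
  · push_neg at hcase
    obtain ⟨w₀, hw₀⟩ := hcase
    set L₀ : Submodule ℂ 𝔄 := Lam.comap inrl with hL₀
    have memL₀ : ∀ w : 𝔄, w ∈ L₀ ↔ (w : Unitization ℂ 𝔄) ∈ Lam := fun w => Iff.rfl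
    have hL₀li : IsLeftIdeal L₀ := by
      intro a w hw
      rw [memL₀] at hw ⊢
      rw [Unitization.inr_mul]
      exact hLam_li _ _ hw
    have hL₀G : ∀ c : A, G c ∈ L₀ := fun c => hGLam c
    have hL₀top : L₀ ≠ ⊤ := by
      intro h
      exact hw₀ ((memL₀ w₀).1 (h ▸ Submodule.mem_top))
    set R : Submodule ℂ (Unitization ℂ 𝔄) := LinearMap.range inrl with hR
    have memR : ∀ z : Unitization ℂ 𝔄, z ∈ R ↔ ∃ w : 𝔄, (w : Unitization ℂ 𝔄) = z := by
      intro z; rw [hR, LinearMap.mem_range]; rfl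
    set N₁ : Submodule ℂ (Unitization ℂ 𝔄) := Lam ⊔ R with hN₁
    have hN₁li : ∀ z w : Unitization ℂ 𝔄, w ∈ N₁ → z * w ∈ N₁ := by
      intro z w hw
      rw [hN₁, Submodule.mem_sup] at hw ⊢
      obtain ⟨p, hp, q, hq, rfl⟩ := hw
      obtain ⟨v, rfl⟩ := (memR q).1 hq
      refine ⟨z * p, hLam_li z p hp, z * (v : Unitization ℂ 𝔄), ?_, by rw [mul_add]⟩
      rw [memR]
      exact ⟨z.fst • v + z.snd * v, (mul_inr_eq z v).symm⟩
    have h1N₁ : (1 : Unitization ℂ 𝔄) ∈ N₁ := by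
      by_contra h1
      have h := hLam_max N₁ hN₁li h1 le_sup_left
      apply hw₀
      rw [← h, hN₁]
      exact Submodule.mem_sup_right ((memR _).2 ⟨w₀, rfl⟩)
    rw [hN₁, Submodule.mem_sup] at h1N₁
    obtain ⟨lam₀, hlam₀, q, hq, hlq⟩ := h1N₁
    obtain ⟨u₀, rfl⟩ := (memR q).1 hq
    have hu₀eq : (u₀ : Unitization ℂ 𝔄) = 1 - lam₀ := by rw [← hlq]; abel
    have hflam₀ : lam₀.fst = 1 := by
      have h := congrArg Prod.fst (congrArg Unitization.toProd hlq)
      simpa using h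
    have hlsnd : lam₀.snd = -u₀ := by
      have h := congrArg Prod.snd (congrArg Unitization.toProd hlq)
      simp only [Unitization.snd_add, Unitization.snd_inr, Unitization.snd_one] at h
      exact eq_neg_of_add_eq_zero_left h
    have hmod : ∀ w : 𝔄, w * u₀ - w ∈ L₀ := by
      intro w
      rw [memL₀]
      have heq : ((w * u₀ - w : 𝔄) : Unitization ℂ 𝔄)
          = -((w : Unitization ℂ 𝔄) * lam₀) := by
        ext
        · simp [fstW_sub]
        · simp [sndW_sub, Unitization.snd_mul, hflam₀, hlsnd, mul_neg]
          abel
      rw [heq]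
      exact Lam.neg_mem (hLam_li _ _ hlam₀)
    have hL₀max : ∀ N : Submodule ℂ 𝔄, IsLeftIdeal N → N ≠ ⊤ → L₀ ≤ N → N = L₀ := by
      intro N hNli hNtop hL₀N
      set N' : Submodule ℂ (Unitization ℂ 𝔄) := (N.map inrl) ⊔ (LinearMap.range (rmulW lam₀))
        with hN'
      have memN' : ∀ z : Unitization ℂ 𝔄, z ∈ N' ↔
          ∃ n ∈ N, ∃ w : Unitization ℂ 𝔄, z = (n : Unitization ℂ 𝔄) + w * lam₀ := by
        intro z
        rw [hN', Submodule.mem_sup]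
        constructor
        · rintro ⟨p, hp, q', hq', rfl⟩
          obtain ⟨n, hn, rfl⟩ := hp
          obtain ⟨w, rfl⟩ := LinearMap.mem_range.1 hq'
          exact ⟨n, hn, w, rfl⟩
        · rintro ⟨n, hn, w, rfl⟩
          exact ⟨(n : Unitization ℂ 𝔄), ⟨n, hn, rfl⟩, w * lam₀,
            LinearMap.mem_range.2 ⟨w, rfl⟩, rfl⟩
      have hN'li : ∀ z w : Unitization ℂ 𝔄, w ∈ N' → z * w ∈ N' := by
        intro z w hw
        rw [memN'] at hw ⊢
        obtain ⟨n, hn, w', rfl⟩ := hw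
        refine ⟨z.fst • n + z.snd * n, N.add_mem (N.smul_mem _ hn) (hNli _ _ hn), z * w', ?_⟩
        rw [mul_add, mul_inr_eq, mul_assoc]
      have hLamN' : Lam ≤ N' := by
        intro μ hμ
        have hμu₀ : μ * (u₀ : Unitization ℂ 𝔄) ∈ Lam := by
          have h1 : μ * (u₀ : Unitization ℂ 𝔄) = μ - μ * lam₀ := by
            rw [hu₀eq, mul_one_sub]
          rw [h1]
          exact Lam.sub_mem hμ (hLam_li μ lam₀ hlam₀)
        have hμu₀' : μ.fst • u₀ + μ.snd * u₀ ∈ L₀ := by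
          rw [memL₀, ← mul_inr_eq]
          exact hμu₀
        have hdecμ : μ = ((μ.fst • u₀ + μ.snd * u₀ : 𝔄) : Unitization ℂ 𝔄) + μ * lam₀ := by
          ext
          · simp [hflam₀]
          · simp [Unitization.snd_mul, hflam₀, hlsnd, mul_neg]
            abel
        rw [memN']
        exact ⟨μ.fst • u₀ + μ.snd * u₀, hL₀N hμu₀', μ, hdecμ⟩
      by_cases h1' : (1 : Unitization ℂ 𝔄) ∈ N'
      · exfalso
        rw [memN'] at h1'
        obtain ⟨n, hn, z, hz⟩ := h1'
        have hfz : z.fst = 1 := by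
          have h := congrArg Prod.fst (congrArg Unitization.toProd hz)
          simp only [Unitization.fst_one, Unitization.fst_add, Unitization.fst_inr,
            Unitization.fst_mul, hflam₀, mul_one, zero_add] at h
          exact h.symm
        have hsnd := congrArg Prod.snd (congrArg Unitization.toProd hz)
        rw [Unitization.snd_one, Unitization.snd_add, Unitization.snd_inr,
          Unitization.snd_mul, hlsnd, hfz, hflam₀, one_smul, one_smul] at hsnd
        -- hsnd : 0 = n + (-u₀ + z.snd + z.snd * -u₀)
        have h10 : u₀ = n - (z.snd * u₀ - z.snd) := by
          have h12 : u₀ - (n - (z.snd * u₀ - z.snd))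
              = -(n + (-u₀ + z.snd + z.snd * -u₀)) := by
            rw [mul_neg]; abel
          rw [← hsnd, neg_zero] at h12
          exact sub_eq_zero.mp h12
        have hu₀N : u₀ ∈ N := h10 ▸ N.sub_mem hn (hL₀N (hmod z.snd))
        apply hNtop
        rw [Submodule.eq_top_iff']
        intro w
        have h1 : w * u₀ ∈ N := hNli w u₀ hu₀N
        have h2 : w * u₀ - w ∈ N := hL₀N (hmod w)
        have h3 := N.sub_mem h1 h2
        rwa [sub_sub_cancel] at h3
      · have hN'Lam := hLam_max N' hN'li h1' hLamN'
        refine le_antisymm ?_ hL₀N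
        intro n hn
        rw [memL₀, ← hN'Lam, memN']
        exact ⟨n, hn, 0, by rw [zero_mul, add_zero]⟩
    have hL₀m : IsMaximalModularLeftIdeal L₀ := ⟨hL₀li, ⟨u₀, hmod⟩, hL₀top, hL₀max⟩
    have hmaps := hG.1.1 hL₀m
    simp only [Set.mem_setOf_eq] at hmaps
    have hcomap : L₀.comap (G : A →ₗ[ℂ] 𝔄) = ⊤ := by
      rw [Submodule.eq_top_iff']
      intro c
      exact hL₀G c
    exact hmaps.2.2.1 hcomap

/-- For a Gelfand theory `(G, 𝔄)` of a Banach algebra `A`: `G a` is quasi-invertible in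
the subalgebra `G(A)` if and only if it is quasi-invertible in `𝔄`. -/
theorem stmt_4 {A 𝔄 : Type*}
    [NonUnitalNormedRing A] [NormedSpace ℂ A] [IsScalarTower ℂ A A] [SMulCommClass ℂ A A]
    [CompleteSpace A]
    [NonUnitalNormedRing 𝔄] [StarRing 𝔄] [CStarRing 𝔄] [NormedSpace ℂ 𝔄]
    [IsScalarTower ℂ 𝔄 𝔄] [SMulCommClass ℂ 𝔄 𝔄] [StarModule ℂ 𝔄] [CompleteSpace 𝔄]
    (G : A →ₙₐ[ℂ] 𝔄) (hG : IsGelfandTheory G) (a : A) :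
    (∃ b : A, G a + G b - G a * G b = 0 ∧ G a + G b - G b * G a = 0) ↔
      (∃ y : 𝔄, G a + y - G a * y = 0 ∧ G a + y - y * G a = 0) := by
  constructor
  · rintro ⟨b, h1, h2⟩
    exact ⟨G b, h1, h2⟩
  · rintro ⟨y, hy1, hy2⟩
    obtain ⟨b, hb⟩ := gelfand_left_qi G hG a y hy1 hy2
    have hb' : G b * G a = G a + G b := by
      have h := congrArg G hb
      rw [map_sub, map_mul, sub_eq_iff_eq_add] at h
      exact h
    have hxy : G a * y = G a + y := by
      have := hy1; rwa [sub_eq_zero, eq_comm] at this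
    have hkey : y = G b := by
      have h1 : G b * G a * y = G a + y + G b * y := by
        rw [hb', add_mul, hxy]
      have h2 : G b * (G a * y) = G a + G b + G b * y := by
        rw [hxy, mul_add, hb']
      rw [mul_assoc, h2] at h1
      have h3 := add_right_cancel h1
      have h4 := add_left_cancel h3
      exact h4.symm
    refine ⟨b, ?_, ?_⟩
    · rw [← hkey]
      exact hy1
    · rw [hb', sub_self]
end

section
/- Let A be a unital Banach algebra and let (G, 𝔄) be a Gelfand theory for A. Then for every a ∈ A, the spectrum of a in A equals the spectrum of G(a) in 𝔄. -/
open scoped Pointwise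

section Aux

variable {R : Type*} [Ring R] [Algebra ℂ R]

lemma IsLeftIdeal.eq_top' {M : Submodule ℂ R} (hM : IsLeftIdeal M) (h1 : (1:R) ∈ M) : M = ⊤ := by
  rw [Submodule.eq_top_iff']
  intro x
  simpa using hM x 1 h1

lemma exists_mmli {b : R} (hb : ∀ c : R, c * b ≠ 1) :
    ∃ L : Submodule ℂ R, IsMaximalModularLeftIdeal L ∧ b ∈ L := by
  set S : Set (Submodule ℂ R) := {M | IsLeftIdeal M ∧ (1:R) ∉ M ∧ b ∈ M} with hS
  have hM₀ : LinearMap.range (LinearMap.mulRight ℂ b) ∈ S := by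
    refine ⟨?_, ?_, ?_⟩
    · rintro a x ⟨y, rfl⟩
      exact ⟨a * y, by simp [mul_assoc]⟩
    · rintro ⟨y, hy⟩
      exact hb y hy
    · exact ⟨1, one_mul b⟩
  have hchainS : ∀ c ⊆ S, IsChain (· ≤ ·) c → ∀ y ∈ c, ∃ ub ∈ S, ∀ z ∈ c, z ≤ ub := by
    intro c hcS hchain y hy
    have hne : c.Nonempty := ⟨y, hy⟩
    have hdir := hchain.directedOn
    refine ⟨sSup c, ⟨?_, ?_, ?_⟩, fun z hz => le_sSup hz⟩
    · intro a x hx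
      obtain ⟨M, hMc, hxM⟩ := (Submodule.mem_sSup_of_directed hne hdir).mp hx
      exact (Submodule.mem_sSup_of_directed hne hdir).mpr ⟨M, hMc, (hcS hMc).1 a x hxM⟩
    · intro h
      obtain ⟨M, hMc, h1⟩ := (Submodule.mem_sSup_of_directed hne hdir).mp h
      exact (hcS hMc).2.1 h1
    · exact le_sSup hy ((hcS hy).2.2)
  obtain ⟨m, hm0, hmS, hmax⟩ := zorn_le_nonempty₀ S hchainS _ hM₀
  have hbm : b ∈ m := hm0 ⟨1, one_mul b⟩
  refine ⟨m, ⟨hmS.1, ⟨1, fun a => by simp⟩, ?_, ?_⟩, hbm⟩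
  · intro h
    exact hmS.2.1 (h ▸ Submodule.mem_top)
  · intro M hMI hMtop hle
    have h1 : (1:R) ∉ M := fun h1 => hMtop (hMI.eq_top' h1)
    exact le_antisymm (hmax ⟨hMI, h1, hle hbm⟩ hle) hle

lemma left_inv_of_not_mem {b : R}
    (h : ∀ L : Submodule ℂ R, IsMaximalModularLeftIdeal L → b ∉ L) : ∃ c, c * b = 1 := by
  by_contra hc
  push_neg at hc
  obtain ⟨L, hL, hbL⟩ := exists_mmli hc
  exact h L hL hbL

lemma unit_not_mem {L : Submodule ℂ R} (hL : IsLeftIdeal L) (hLtop : L ≠ ⊤)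
    {x : R} (hx : IsUnit x) : x ∉ L := by
  intro hxL
  obtain ⟨u, rfl⟩ := hx
  have h1 := hL ↑u⁻¹ _ hxL
  rw [Units.inv_mul] at h1
  exact hLtop (hL.eq_top' h1)

lemma isUnit_of_left_right {b c d : R} (h1 : c * b = 1) (h2 : b * d = 1) : IsUnit b := by
  have hcd : c = d := by rw [← mul_one c, ← h2, ← mul_assoc, h1, one_mul]
  exact ⟨⟨b, c, by rw [hcd]; exact h2, h1⟩, rfl⟩

end Aux

section Closed

variable {R : Type*} [NormedRing R] [NormedAlgebra ℂ R] [CompleteSpace R]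

lemma mmli_isClosed {L : Submodule ℂ R} (hL : IsMaximalModularLeftIdeal L) :
    IsClosed (L : Set R) := by
  obtain ⟨hLI, -, hLt, hLmax⟩ := hL
  have hone : (1:R) ∉ closure (L : Set R) := by
    intro h
    rw [Metric.mem_closure_iff] at h
    obtain ⟨x, hxL, hdx⟩ := h 1 one_pos
    have hnorm : ‖1 - x‖ < 1 := by rwa [dist_eq_norm] at hdx
    have hxu : IsUnit x := by
      have := (Units.oneSub (1 - x) hnorm).isUnit
      rwa [Units.val_oneSub, sub_sub_cancel] at this
    exact unit_not_mem hLI hLt hxu hxL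
  have hIdeal' : IsLeftIdeal L.topologicalClosure := by
    intro c x hx
    have hmaps : Set.MapsTo (c * ·) (L : Set R) (L : Set R) := fun y hy => hLI c y hy
    exact hmaps.closure (continuous_const.mul continuous_id) hx
  have htop : L.topologicalClosure ≠ ⊤ := by
    intro h
    exact hone (by rw [← Submodule.topologicalClosure_coe, h]; trivial)
  have heq : L.topologicalClosure = L := hLmax _ hIdeal' htop L.le_topologicalClosure
  have : closure (L : Set R) = (L : Set R) := by
    rw [← Submodule.topologicalClosure_coe, heq]
  exact isClosed_of_closure_subset this.le

end Closed

section Main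

variable {A 𝔄 : Type*} [NormedRing A] [NormedAlgebra ℂ A] [CompleteSpace A]
    [NormedRing 𝔄] [StarRing 𝔄] [CStarRing 𝔄] [NormedAlgebra ℂ 𝔄]
    [StarModule ℂ 𝔄] [CompleteSpace 𝔄]

lemma gelfand_sub_one_mem (G : A →ₙₐ[ℂ] 𝔄) (hG : IsGelfandTheory G)
    {L : Submodule ℂ 𝔄} (hL : IsMaximalModularLeftIdeal L) : G 1 - 1 ∈ L := by
  have hclosed : IsClosed (L : Set 𝔄) := mmli_isClosed hL
  have hdense := hG.2 L hL
  have hmaps : Set.MapsTo (fun x => G 1 * x - x) (Set.range ⇑G + (L : Set 𝔄)) (L : Set 𝔄) := by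
    intro x hx
    rw [Set.mem_add] at hx
    obtain ⟨u, ⟨b, rfl⟩, l, hl, rfl⟩ := hx
    have h1 : G 1 * G b = G b := by rw [← map_mul, one_mul]
    have h2 : G 1 * (G b + l) - (G b + l) = G 1 * l - l := by rw [mul_add, h1]; abel
    show G 1 * (G b + l) - (G b + l) ∈ L
    rw [h2]
    exact L.sub_mem (hL.1 (G 1) l hl) hl
  have hcont : Continuous (fun x : 𝔄 => G 1 * x - x) :=
    (continuous_const.mul continuous_id).sub continuous_id
  have h := hmaps.closure hcont
  rw [hdense.closure_eq, hclosed.closure_eq] at h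
  have h1 := h (Set.mem_univ 1)
  simpa using h1

lemma gelfand_map_one (G : A →ₙₐ[ℂ] 𝔄) (hG : IsGelfandTheory G) : G 1 = 1 := by
  set r := G 1 - 1 with hrdef
  have hrL : ∀ L : Submodule ℂ 𝔄, IsMaximalModularLeftIdeal L → r ∈ L :=
    fun L hL => gelfand_sub_one_mem G hG hL
  set s := star r * r with hsdef
  have hsL : ∀ L : Submodule ℂ 𝔄, IsMaximalModularLeftIdeal L → s ∈ L :=
    fun L hL => hL.1 (star r) r (hrL L hL)
  have key : ∀ μ : ℂ, μ ≠ 0 → ∃ c, c * (algebraMap ℂ 𝔄 μ - s) = 1 := by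
    intro μ hμ
    apply left_inv_of_not_mem
    intro L hL hmem
    have h1 : algebraMap ℂ 𝔄 μ ∈ L := by
      have := L.add_mem hmem (hsL L hL)
      simpa using this
    have hone : (1:𝔄) ∈ L := by
      have := L.smul_mem μ⁻¹ h1
      rwa [Algebra.algebraMap_eq_smul_one, smul_smul, inv_mul_cancel₀ hμ, one_smul] at this
    exact hL.2.2.1 (hL.1.eq_top' hone)
  have hσ : spectrum ℂ s ⊆ {0} := by
    intro lam hlam
    by_contra hne
    simp only [Set.mem_singleton_iff] at hne
    rw [spectrum.mem_iff] at hlam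
    apply hlam
    obtain ⟨c, hc⟩ := key lam hne
    obtain ⟨d, hd⟩ := key (star lam) (star_ne_zero.mpr hne)
    have hss : star s = s := (IsSelfAdjoint.star_mul_self r).star_eq
    have hd' : (algebraMap ℂ 𝔄 lam - s) * star d = 1 := by
      have h := congrArg star hd
      rwa [star_mul, star_sub, ← algebraMap_star_comm, star_star, hss, star_one] at h
    exact isUnit_of_left_right hc hd'
  letI : CStarAlgebra 𝔄 := {}
  have hrad : spectralRadius ℂ s = 0 := by
    refine le_antisymm ?_ zero_le
    unfold spectralRadius
    refine iSup₂_le fun k hk => ?_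
    have hk0 : k = 0 := hσ hk
    simp [hk0]
  have hnorm := (IsSelfAdjoint.star_mul_self r).spectralRadius_eq_nnnorm
  rw [hrad] at hnorm
  have hs0 : s = 0 := by
    have h0 : ‖s‖₊ = 0 := by exact_mod_cast hnorm.symm
    simpa using h0
  have hr0 : r = 0 := by
    have h2 : ‖r‖ * ‖r‖ = 0 := by rw [← CStarRing.norm_star_mul_self, ← hsdef, hs0, norm_zero]
    exact norm_eq_zero.mp (mul_self_eq_zero.mp h2)
  rw [hrdef] at hr0
  exact sub_eq_zero.mp hr0

theorem stmt_5_aux (G : A →ₙₐ[ℂ] 𝔄) (hG : IsGelfandTheory G) (a : A) :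
    spectrum ℂ a = spectrum ℂ (G a) := by
  have hGone : G 1 = 1 := gelfand_map_one G hG
  ext lam
  rw [spectrum.mem_iff, spectrum.mem_iff, not_iff_not]
  have hGmap : G (algebraMap ℂ A lam - a) = algebraMap ℂ 𝔄 lam - G a := by
    rw [map_sub, Algebra.algebraMap_eq_smul_one, Algebra.algebraMap_eq_smul_one (A := 𝔄),
      map_smul, hGone]
  constructor
  · rintro ⟨u, hu⟩
    have e1 : (↑u⁻¹ : A) * (algebraMap ℂ A lam - a) = 1 := by rw [← hu]; exact u.inv_mul
    have e2 : (algebraMap ℂ A lam - a) * ↑u⁻¹ = 1 := by rw [← hu]; exact u.mul_inv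
    exact isUnit_of_left_right (c := G ↑u⁻¹) (d := G ↑u⁻¹)
      (by rw [← hGmap, ← map_mul, e1, hGone]) (by rw [← hGmap, ← map_mul, e2, hGone])
  · intro hB
    have hnot : ∀ M : Submodule ℂ A, IsMaximalModularLeftIdeal M →
        (algebraMap ℂ A lam - a) ∉ M := by
      intro M hM hmemM
      obtain ⟨L, hLmml, hLM⟩ := hG.1.surjOn hM
      have hGmem : G (algebraMap ℂ A lam - a) ∈ L := by
        rw [← hLM] at hmemM
        exact hmemM
      rw [hGmap] at hGmem
      exact unit_not_mem hLmml.1 hLmml.2.2.1 hB hGmem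
    obtain ⟨c, hc⟩ := left_inv_of_not_mem hnot
    have hGc : G c * (algebraMap ℂ 𝔄 lam - G a) = 1 := by
      rw [← hGmap, ← map_mul, hc, hGone]
    have hGcUnit : IsUnit (G c) := by
      obtain ⟨v, hv⟩ := hB
      have hGcv : G c = ↑v⁻¹ := by
        calc G c = G c * (↑v * ↑v⁻¹) := by rw [v.mul_inv, mul_one]
        _ = (G c * (algebraMap ℂ 𝔄 lam - G a)) * ↑v⁻¹ := by rw [hv, mul_assoc]
        _ = ↑v⁻¹ := by rw [hGc, one_mul]
      rw [hGcv]
      exact ⟨v⁻¹, rfl⟩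
    have hcnot : ∀ M : Submodule ℂ A, IsMaximalModularLeftIdeal M → c ∉ M := by
      intro M hM hmemM
      obtain ⟨L, hLmml, hLM⟩ := hG.1.surjOn hM
      have hGmem : G c ∈ L := by
        rw [← hLM] at hmemM
        exact hmemM
      exact unit_not_mem hLmml.1 hLmml.2.2.1 hGcUnit hGmem
    obtain ⟨d, hd⟩ := left_inv_of_not_mem hcnot
    have hda : d = algebraMap ℂ A lam - a := by
      calc d = d * (c * (algebraMap ℂ A lam - a)) := by rw [hc, mul_one]
      _ = (d * c) * (algebraMap ℂ A lam - a) := by rw [mul_assoc]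
      _ = _ := by rw [hd, one_mul]
    have hbc : (algebraMap ℂ A lam - a) * c = 1 := by rw [← hda]; exact hd
    exact isUnit_of_left_right hc hbc

end Main

/-- If `A` is a unital Banach algebra and `(G, 𝔄)` a Gelfand theory for `A` (so that `𝔄`
is necessarily unital), then `σ_A(a) = σ_𝔄(G a)` for every `a ∈ A`. -/
theorem stmt_5 {A 𝔄 : Type*} [NormedRing A] [NormedAlgebra ℂ A] [CompleteSpace A]
    [NormedRing 𝔄] [StarRing 𝔄] [CStarRing 𝔄] [NormedAlgebra ℂ 𝔄]
    [StarModule ℂ 𝔄] [CompleteSpace 𝔄]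
    (G : A →ₙₐ[ℂ] 𝔄) (hG : IsGelfandTheory G) (a : A) :
    spectrum ℂ a = spectrum ℂ (G a) :=
  stmt_5_aux G hG a
end

section
/- Let A be a non-unital Banach algebra and let (G, 𝔄) be a Gelfand theory for A. Then for every a ∈ A, σ_A(a) = σ_𝔄(G(a)) ∪ {0}. -/
open scoped Pointwise

section Aux

variable {B : Type*} [NonUnitalNormedRing B] [NormedSpace ℂ B]
  [IsScalarTower ℂ B B] [SMulCommClass ℂ B B]

/-- Left quasi-invertibility. -/
def LQI {R : Type*} [NonUnitalRing R] (x : R) : Prop := ∃ y : R, x + y + y * x = 0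

/-- The linear map `a ↦ a * x + a`. -/
def gmap (x : B) : B →ₗ[ℂ] B where
  toFun a := a * x + a
  map_add' a b := by rw [add_mul]; abel
  map_smul' c a := by simp [smul_mul_assoc, smul_add]

lemma gmap_apply (x a : B) : gmap x a = a * x + a := rfl

lemma top_of_neg_mem {x : B} {L : Submodule ℂ B} (hL : IsLeftIdeal L)
    (hg : ∀ a : B, a * x + a ∈ L) (hx : -x ∈ L) : L = ⊤ := by
  rw [Submodule.eq_top_iff']
  intro a
  have h1 : a * -x ∈ L := hL a _ hx
  have h2 := L.add_mem (hg a) h1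
  have h3 : a * x + a + a * -x = a := by rw [mul_neg]; abel
  rwa [h3] at h2

lemma exists_mmli_s6 {x : B} (h : ¬ LQI x) :
    ∃ N : Submodule ℂ B, IsMaximalModularLeftIdeal N ∧ ∀ a : B, a * x + a ∈ N := by
  set S : Set (Submodule ℂ B) :=
    {L | IsLeftIdeal L ∧ (∀ a : B, a * x + a ∈ L) ∧ -x ∉ L} with hS
  have hbase : LinearMap.range (gmap x) ∈ S := by
    refine ⟨?_, fun a => ⟨a, rfl⟩, ?_⟩
    · rintro a _ ⟨b, rfl⟩
      exact ⟨a * b, by simp only [gmap_apply]; rw [mul_assoc, mul_add]⟩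
    · rintro ⟨y, hy⟩
      refine h ⟨y, ?_⟩
      rw [gmap_apply] at hy
      rw [add_assoc, add_comm y (y * x), ← add_assoc]
      rw [show x + y * x + y = x + (y * x + y) by abel, hy, add_neg_cancel]
  have hzorn : ∀ c ⊆ S, IsChain (· ≤ ·) c → ∀ y ∈ c, ∃ ub ∈ S, ∀ z ∈ c, z ≤ ub := by
    intro c hcS hc y hy
    refine ⟨sSup c, ⟨?_, ?_, ?_⟩, fun z hz => le_sSup hz⟩
    · intro a z hz
      obtain ⟨L, hLc, hzL⟩ := (Submodule.mem_sSup_of_directed ⟨y, hy⟩ hc.directedOn).mp hz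
      exact le_sSup hLc ((hcS hLc).1 a z hzL)
    · exact fun a => le_sSup hy ((hcS hy).2.1 a)
    · intro hmem
      obtain ⟨L, hLc, hzL⟩ := (Submodule.mem_sSup_of_directed ⟨y, hy⟩ hc.directedOn).mp hmem
      exact (hcS hLc).2.2 hzL
  obtain ⟨N, -, hN⟩ := zorn_le_nonempty₀ S hzorn _ hbase
  obtain ⟨hNl, hNg, hNx⟩ := hN.prop
  refine ⟨N, ⟨hNl, ⟨-x, fun a => ?_⟩, fun htop => hNx (htop ▸ Submodule.mem_top), ?_⟩, hNg⟩
  · have : a * -x - a = -(a * x + a) := by rw [mul_neg]; abel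
    rw [this]; exact N.neg_mem (hNg a)
  · intro M hMl hMtop hNM
    have hMx : -x ∉ M := fun hmem => hMtop (top_of_neg_mem hMl (fun a => hNM (hNg a)) hmem)
    have hMS : M ∈ S := ⟨hMl, fun a => hNM (hNg a), hMx⟩
    exact le_antisymm (hN.2 hMS hNM) hNM

variable [CompleteSpace B]

lemma mmli_isClosed_s6 {M : Submodule ℂ B} (hM : IsMaximalModularLeftIdeal M) :
    IsClosed (M : Set B) := by
  obtain ⟨hleft, ⟨u, hu⟩, hne, hmax⟩ := hM
  have hclleft : IsLeftIdeal M.topologicalClosure := by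
    intro a z hz
    have hmaps : Set.MapsTo (fun b => a * b) (M : Set B) (M : Set B) := fun m hm => hleft a m hm
    have hcont : Continuous fun b : B => a * b := continuous_const.mul continuous_id
    have := hmaps.closure hcont (x := z) hz
    exact this
  by_cases hT : M.topologicalClosure = ⊤
  · exfalso
    have hu' : u ∈ closure (M : Set B) := by
      have : u ∈ M.topologicalClosure := hT ▸ Submodule.mem_top
      exact this
    obtain ⟨l, hl, hdist⟩ := Metric.mem_closure_iff.mp hu' 1 one_pos
    set z := u - l with hzdef
    have hz : ‖z‖ < 1 := by rwa [← dist_eq_norm]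
    set w : ℕ → B := fun n => (fun b => z * b)^[n] z with hwdef
    have hw0 : w 0 = z := rfl
    have hwsucc : ∀ n, w (n + 1) = z * w n := fun n => Function.iterate_succ_apply' _ _ _
    have hbound : ∀ n, ‖w n‖ ≤ ‖z‖ ^ n * ‖z‖ := by
      intro n
      induction n with
      | zero => simp [hw0]
      | succ n ih =>
        rw [hwsucc]
        calc ‖z * w n‖ ≤ ‖z‖ * ‖w n‖ := norm_mul_le _ _
          _ ≤ ‖z‖ * (‖z‖ ^ n * ‖z‖) := by
              exact mul_le_mul_of_nonneg_left ih (norm_nonneg z)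
          _ = ‖z‖ ^ (n + 1) * ‖z‖ := by ring
    have hsum : Summable w :=
      Summable.of_norm_bounded
        ((summable_geometric_of_lt_one (norm_nonneg z) hz).mul_right ‖z‖) hbound
    set s := ∑' n, w n with hsdef
    have hcomm : ∀ n, w n * z = z * w n := by
      intro n
      induction n with
      | zero => rw [hw0]
      | succ n ih => rw [hwsucc, mul_assoc, ← ih, ← mul_assoc, ← hwsucc]
    have hsz : s * z = s - z := by
      have hmap : s * z = ∑' n, w n * z := by
        have := ((ContinuousLinearMap.mul ℂ B).flip z).map_tsum hsum
        simpa using this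
      rw [hmap]
      have hterm : ∀ n, w n * z = w (n + 1) := fun n => (hcomm n).trans (hwsucc n).symm
      have h0 := Summable.tsum_eq_zero_add hsum
      rw [hw0] at h0
      calc (∑' n, w n * z) = ∑' n, w (n + 1) := tsum_congr hterm
        _ = s - z := by rw [eq_sub_iff_add_eq, add_comm]; exact h0.symm
    have hz_mem : z ∈ M := by
      have h1 : z = -(s * u - s) + s * l := by
        have h2 : z = s - s * z := by rw [hsz]; abel
        calc z = s - s * z := h2
          _ = s - (s * u - s * l) := by rw [hzdef, mul_sub]
          _ = -(s * u - s) + s * l := by abel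
      rw [h1]
      exact M.add_mem (M.neg_mem (hu s)) (hleft s l hl)
    have hu_mem : u ∈ M := by
      have : u = l + z := by rw [hzdef]; abel
      rw [this]; exact M.add_mem hl hz_mem
    apply hne
    rw [Submodule.eq_top_iff']
    intro a
    have h3 : a = a * u - (a * u - a) := by abel
    rw [h3]
    exact M.sub_mem (hleft a u hu_mem) (hu a)
  · have hMT : M.topologicalClosure = M :=
      hmax _ hclleft hT M.le_topologicalClosure
    have : closure (M : Set B) = (M : Set B) := by
      have := congrArg (fun L : Submodule ℂ B => (L : Set B)) hMT
      simpa [Submodule.topologicalClosure_coe] using this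
    exact this ▸ isClosed_closure

end Aux

section Main

variable {A 𝔄 : Type*}
    [NonUnitalNormedRing A] [NormedSpace ℂ A] [IsScalarTower ℂ A A] [SMulCommClass ℂ A A]
    [NonUnitalNormedRing 𝔄] [StarRing 𝔄] [CStarRing 𝔄] [NormedSpace ℂ 𝔄]
    [IsScalarTower ℂ 𝔄 𝔄] [SMulCommClass ℂ 𝔄 𝔄] [StarModule ℂ 𝔄] [CompleteSpace 𝔄]
    (G : A →ₙₐ[ℂ] 𝔄)

lemma lqi_of_lqi_G (hG : IsGelfandTheory G) (x : A) (hx : LQI (G x)) : LQI x := by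
  by_contra h
  obtain ⟨N, hN, hNg⟩ := exists_mmli_s6 h
  obtain ⟨M, hM, hMN⟩ := hG.1.surjOn hN
  simp only [Set.mem_setOf_eq] at hM
  have hmem : ∀ z : A, z ∈ N ↔ G z ∈ M := by
    intro z
    rw [← hMN]
    exact Iff.rfl
  set K : Submodule ℂ 𝔄 := Submodule.comap (gmap (G x)) M with hK
  have hKmem : ∀ b : 𝔄, b ∈ K ↔ b * G x + b ∈ M := fun b => Iff.rfl
  have hKG : ∀ a : A, G a ∈ K := by
    intro a
    rw [hKmem]
    have : G a * G x + G a = G (a * x + a) := by rw [map_add, map_mul]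
    rw [this]
    exact (hmem _).mp (hNg a)
  have hKx : G x ∈ K := by
    rw [hKmem]
    have : G x * G x + G x = G (x * x + x) := by rw [map_add, map_mul]
    rw [this]
    exact (hmem _).mp (hNg x)
  have hKleft : ∀ b k : 𝔄, k ∈ K → b * k ∈ K := by
    intro b k hk
    rw [hKmem] at hk ⊢
    have : b * k * G x + b * k = b * (k * G x + k) := by rw [mul_assoc, mul_add]
    rw [this]
    exact hM.1 b _ hk
  obtain ⟨y, hy⟩ := hx
  have hyK : y ∈ K := by
    have h1 : y + (G x + y * G x) = 0 := by rw [← hy]; abel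
    rw [eq_neg_of_add_eq_zero_left h1]
    exact K.neg_mem (K.add_mem hKx (hKleft y _ hKx))
  have hGxM : G x ∈ M := by
    have h3 : y * G x + y + G x = 0 := by rw [← hy]; abel
    have h4 : -(G x) ∈ M := eq_neg_of_add_eq_zero_left h3 ▸ (hKmem y).mp hyK
    simpa using M.neg_mem h4
  have hKM : ∀ b : 𝔄, b ∈ K → b ∈ M := by
    intro b hb
    rw [hKmem] at hb
    have h6 : b * G x ∈ M := hM.1 b _ hGxM
    have h7 : b = b * G x + b - b * G x := by abel
    rw [h7]
    exact M.sub_mem hb h6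
  have hdense := hG.2 M hM
  have hsub : Set.range ⇑G + (M : Set 𝔄) ⊆ (M : Set 𝔄) := by
    intro w hw
    rw [Set.mem_add] at hw
    obtain ⟨p, hp, q, hq, rfl⟩ := hw
    obtain ⟨a, rfl⟩ := hp
    exact M.add_mem (hKM _ (hKG a)) hq
  have hclosed : IsClosed (M : Set 𝔄) := mmli_isClosed_s6 hM
  have huniv : (M : Set 𝔄) = Set.univ := by
    apply Set.eq_univ_of_univ_subset
    rw [← hdense.closure_eq]
    exact closure_minimal hsub hclosed
  refine hM.2.2.1 (Submodule.eq_top_iff'.mpr fun b => ?_)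
  have : b ∈ (M : Set 𝔄) := huniv ▸ Set.mem_univ b
  exact this

open PreQuasiregular in
lemma isQR_G_iff (hG : IsGelfandTheory G) (x : A) :
    IsQuasiregular x ↔ IsQuasiregular (G x) := by
  refine ⟨fun h => h.map G, fun h => ?_⟩
  have hlq : LQI (G x) := by
    obtain ⟨c, hc1, hc2⟩ := isQuasiregular_iff.mp h
    exact ⟨c, hc2⟩
  obtain ⟨u, hu⟩ := h
  have huval : u.val = equiv (G x) := by
    rw [← hu]; rfl
  obtain ⟨y, hy⟩ := lqi_of_lqi_G G hG x hlq
  have h1 : equiv (G y) * equiv (G x) = 1 := by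
    apply equiv.symm.injective
    have := congrArg G hy
    simp only [map_add, map_mul, map_zero] at this
    simpa using this
  have h2 : equiv (G y) = ↑u⁻¹ := by
    apply Units.eq_inv_of_mul_eq_one_right
    rw [huval]
    exact h1
  have hQRGy : IsQuasiregular (G y) := ⟨u⁻¹, by rw [← h2]; rfl⟩
  have hlqy : LQI (G y) := by
    obtain ⟨c, hc1, hc2⟩ := isQuasiregular_iff.mp hQRGy
    exact ⟨c, hc2⟩
  obtain ⟨z, hz⟩ := lqi_of_lqi_G G hG y hlqy
  have k1 : equiv z * equiv y = 1 := by
    apply equiv.symm.injective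
    simpa using hz
  have k2 : equiv y * equiv x = 1 := by
    apply equiv.symm.injective
    simpa using hy
  have k3 : equiv x = equiv z := by
    calc equiv x = 1 * equiv x := (one_mul _).symm
      _ = equiv z * equiv y * equiv x := by rw [k1]
      _ = equiv z * (equiv y * equiv x) := mul_assoc _ _ _
      _ = equiv z := by rw [k2, mul_one]
  have k4 : equiv x * equiv y = 1 := by rw [k3, k1]
  exact ⟨⟨equiv x, equiv y, k4, k2⟩, rfl⟩

end Main

/-- If `A` is a non-unital Banach algebra and `(G, 𝔄)` a Gelfand theory for `A`, then
`σ_A(a) = σ_𝔄(G a) ∪ {0}` for every `a ∈ A`; here the spectra are taken in the respective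
unitizations (`quasispectrum`). -/
theorem stmt_6 {A 𝔄 : Type*}
    [NonUnitalNormedRing A] [NormedSpace ℂ A] [IsScalarTower ℂ A A] [SMulCommClass ℂ A A]
    [CompleteSpace A]
    [NonUnitalNormedRing 𝔄] [StarRing 𝔄] [CStarRing 𝔄] [NormedSpace ℂ 𝔄]
    [IsScalarTower ℂ 𝔄 𝔄] [SMulCommClass ℂ 𝔄 𝔄] [StarModule ℂ 𝔄] [CompleteSpace 𝔄]
    (hnu : ¬ ∃ e : A, ∀ x : A, e * x = x ∧ x * e = x)
    (G : A →ₙₐ[ℂ] 𝔄) (hG : IsGelfandTheory G) (a : A) :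
    quasispectrum ℂ a = quasispectrum ℂ (G a) ∪ {0} := by
  ext r
  by_cases hr : r = 0
  · subst hr
    simp [quasispectrum.zero_mem]
  · have hu : IsUnit r := isUnit_iff_ne_zero.mpr hr
    have hGsmul : G (-(hu.unit⁻¹ • a)) = -(hu.unit⁻¹ • G a) := by
      rw [map_neg]
      congr 1
      rw [Units.smul_def, Units.smul_def, map_smul]
    have hiff := isQR_G_iff G hG (-(hu.unit⁻¹ • a))
    rw [hGsmul] at hiff
    have hmem1 : r ∈ quasispectrum ℂ a ↔ ¬ IsQuasiregular (-(hu.unit⁻¹ • a)) := by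
      constructor
      · exact fun H => H hu
      · intro H hr'
        rwa [show hr'.unit = hu.unit from Units.ext (hr'.unit_spec.trans hu.unit_spec.symm)]
    have hmem2 : r ∈ quasispectrum ℂ (G a) ↔ ¬ IsQuasiregular (-(hu.unit⁻¹ • G a)) := by
      constructor
      · exact fun H => H hu
      · intro H hr'
        rwa [show hr'.unit = hu.unit from Units.ext (hr'.unit_spec.trans hu.unit_spec.symm)]
    simp only [Set.mem_union, Set.mem_singleton_iff, hmem1, hmem2, hr, or_false]
    exact not_congr hiff
end

section
/- Let A be a Banach algebra and let I be a closed ideal of A. Then the map L ↦ I ∩ L is a bijection from the set {L ∈ Λ_A : I ⊄ L} of maximal modular left ideals of A not containing I onto the set Λ_I of maximal modular left ideals of I. -/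
open scoped Pointwise

/-- `L` is a maximal modular left ideal of the algebra `J` (a two-sided ideal of the
ambient algebra, with `L` expressed as a submodule of the ambient algebra contained
in `J`). -/
def IsMaximalModularLeftIdealIn {A : Type*} [NonUnitalNonAssocRing A] [Module ℂ A]
    (J L : Submodule ℂ A) : Prop :=
  L ≤ J ∧ (∀ a ∈ J, ∀ x ∈ L, a * x ∈ L) ∧ (∃ u ∈ J, ∀ a ∈ J, a * u - a ∈ L) ∧ L ≠ J ∧
    ∀ M : Submodule ℂ A, M ≤ J → (∀ a ∈ J, ∀ x ∈ M, a * x ∈ M) → M ≠ J → L ≤ M → M = L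

section Aux

variable {A : Type*} [NonUnitalRing A] [Module ℂ A] [SMulCommClass ℂ A A]

/-- The "extension" of an `I`-left-ideal `M` to `A`: all `a` with `I * a ⊆ M`. -/
def extIdeal (I M : Submodule ℂ A) : Submodule ℂ A where
  carrier := {a | ∀ b ∈ I, b * a ∈ M}
  add_mem' := fun hx hy b hb => by rw [mul_add]; exact M.add_mem (hx b hb) (hy b hb)
  zero_mem' := fun b _ => by rw [mul_zero]; exact M.zero_mem
  smul_mem' := fun c x hx b hb => by rw [mul_smul_comm]; exact M.smul_mem c (hx b hb)

lemma mem_extIdeal {I M : Submodule ℂ A} {a : A} :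
    a ∈ extIdeal I M ↔ ∀ b ∈ I, b * a ∈ M := Iff.rfl

lemma extIdeal_isLeftIdeal {I M : Submodule ℂ A}
    (hI : ∀ a : A, ∀ x ∈ I, a * x ∈ I ∧ x * a ∈ I) :
    IsLeftIdeal (extIdeal I M) := fun a x hx b hb => by
  rw [← mul_assoc]; exact hx _ ((hI a b hb).2)

lemma exists_modular_unit {I L : Submodule ℂ A}
    (hI : ∀ a : A, ∀ x ∈ I, a * x ∈ I ∧ x * a ∈ I)
    (hL : IsMaximalModularLeftIdeal L) (hIL : ¬ I ≤ L) :
    ∃ v ∈ I, ∀ a ∈ I, a * v - a ∈ I ⊓ L := by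
  obtain ⟨hLid, ⟨u, hu⟩, hLne, hLmax⟩ := hL
  have hsup : I ⊔ L = ⊤ := by
    by_contra hne
    have hid : IsLeftIdeal (I ⊔ L) := by
      intro a x hx
      obtain ⟨y, hy, z, hz, rfl⟩ := Submodule.mem_sup.mp hx
      rw [mul_add]
      exact Submodule.add_mem _ (Submodule.mem_sup_left ((hI a y hy).1))
        (Submodule.mem_sup_right (hLid a z hz))
    exact hIL (le_sup_left.trans (hLmax _ hid hne le_sup_right).le)
  obtain ⟨v, hv, w, hw, hvw⟩ := Submodule.mem_sup.mp (hsup ▸ Submodule.mem_top (x := u))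
  refine ⟨v, hv, fun a ha => Submodule.mem_inf.mpr ⟨I.sub_mem ((hI v a ha).2) ha, ?_⟩⟩
  have hrw : a * v - a = (a * u - a) - a * w := by rw [← hvw, mul_add]; abel
  rw [hrw]
  exact L.sub_mem (hu a) (hLid a w hw)

lemma key_eq {I L : Submodule ℂ A}
    (hI : ∀ a : A, ∀ x ∈ I, a * x ∈ I ∧ x * a ∈ I)
    (hL : IsMaximalModularLeftIdeal L) (hIL : ¬ I ≤ L) :
    extIdeal I (I ⊓ L) = L := by
  obtain ⟨v, hv, hmod⟩ := exists_modular_unit hI hL hIL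
  obtain ⟨hLid, _, hLne, hLmax⟩ := hL
  have hle : L ≤ extIdeal I (I ⊓ L) := fun a ha => mem_extIdeal.mpr fun b hb =>
    Submodule.mem_inf.mpr ⟨(hI a b hb).2, hLid b a ha⟩
  have hne : extIdeal I (I ⊓ L) ≠ ⊤ := by
    intro htop
    apply hIL
    intro a ha
    have hvmem : v ∈ extIdeal I (I ⊓ L) := by rw [htop]; trivial
    have h1 : a * v ∈ I ⊓ L := mem_extIdeal.mp hvmem a ha
    have h2 : a * v - a ∈ I ⊓ L := hmod a ha
    have h3 : a ∈ I ⊓ L := by simpa using Submodule.sub_mem _ h1 h2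
    exact (Submodule.mem_inf.mp h3).2
  exact hLmax _ (extIdeal_isLeftIdeal hI) hne hle

end Aux

/-- For a closed (two-sided) ideal `I` of a Banach algebra `A`, the map `L ↦ I ∩ L` is a
bijection from the maximal modular left ideals of `A` not containing `I` onto the maximal
modular left ideals of `I`. -/
theorem stmt_12 {A : Type*}
    [NonUnitalNormedRing A] [NormedSpace ℂ A] [IsScalarTower ℂ A A] [SMulCommClass ℂ A A]
    [CompleteSpace A]
    (I : Submodule ℂ A) (hI : ∀ a : A, ∀ x ∈ I, a * x ∈ I ∧ x * a ∈ I)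
    (hIc : IsClosed (I : Set A)) :
    Set.BijOn (fun L : Submodule ℂ A => I ⊓ L)
      {L | IsMaximalModularLeftIdeal L ∧ ¬ I ≤ L}
      {M | IsMaximalModularLeftIdealIn I M} := by
  refine ⟨?_, ?_, ?_⟩
  · -- MapsTo
    rintro L ⟨hLfull, hIL⟩
    obtain ⟨v, hv, hmod⟩ := exists_modular_unit hI hLfull hIL
    obtain ⟨hLid, _, hLne, hLmax⟩ := hLfull
    refine ⟨inf_le_left, ?_, ⟨v, hv, hmod⟩, ?_, ?_⟩
    · intro a ha x hx
      obtain ⟨hx1, hx2⟩ := Submodule.mem_inf.mp hx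
      exact Submodule.mem_inf.mpr ⟨(hI a x hx1).1, hLid a x hx2⟩
    · exact fun h => hIL (inf_eq_left.mp h)
    · intro N hNI hNid hNne hMN
      have hLN : L ≤ extIdeal I N := fun a ha => mem_extIdeal.mpr fun b hb =>
        hMN (Submodule.mem_inf.mpr ⟨(hI a b hb).2, hLid b a ha⟩)
      have hne : extIdeal I N ≠ ⊤ := by
        intro htop
        apply hNne
        refine le_antisymm hNI fun a ha => ?_
        have hvmem : v ∈ extIdeal I N := by rw [htop]; trivial
        have h1 : a * v ∈ N := mem_extIdeal.mp hvmem a ha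
        have h2 : a * v - a ∈ N := hMN (hmod a ha)
        simpa using N.sub_mem h1 h2
      have heqL : extIdeal I N = L := hLmax _ (extIdeal_isLeftIdeal hI) hne hLN
      refine le_antisymm (fun x hx => ?_) hMN
      have hxL : x ∈ L := heqL ▸ (mem_extIdeal.mpr fun b hb => hNid b hb x hx)
      exact Submodule.mem_inf.mpr ⟨hNI hx, hxL⟩
  · -- InjOn
    rintro L₁ ⟨h₁, h₁'⟩ L₂ ⟨h₂, h₂'⟩ heq
    simp only at heq
    rw [← key_eq hI h₁ h₁', ← key_eq hI h₂ h₂', heq]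
  · -- SurjOn
    rintro M ⟨hMI, hMid, ⟨e, heI, he⟩, hMne, hMmax⟩
    set L := extIdeal I M with hLdef
    have hLid : IsLeftIdeal L := extIdeal_isLeftIdeal hI
    have hmodL : ∀ a : A, a * e - a ∈ L := fun a => mem_extIdeal.mpr fun b hb => by
      rw [mul_sub, ← mul_assoc]
      exact he (b * a) ((hI a b hb).2)
    have hML : M ≤ L := fun m hm => mem_extIdeal.mpr fun b hb => hMid b hb m hm
    have heL : e ∉ L := by
      intro h
      apply hMne
      refine le_antisymm hMI fun a ha => ?_
      have h1 : a * e ∈ M := mem_extIdeal.mp h a ha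
      simpa using M.sub_mem h1 (he a ha)
    have hnotIL : ¬ I ≤ L := fun h => heL (h heI)
    have hLne : L ≠ ⊤ := fun h => heL (h ▸ trivial)
    have hinf : I ⊓ L = M := by
      apply hMmax
      · exact inf_le_left
      · intro a ha x hx
        obtain ⟨hx1, hx2⟩ := Submodule.mem_inf.mp hx
        exact Submodule.mem_inf.mpr
          ⟨(hI a x hx1).1, hML (mem_extIdeal.mp hx2 a ha)⟩
      · exact fun h => hnotIL (inf_eq_left.mp h)
      · exact le_inf hMI hML
    have hLmaxi : ∀ L'' : Submodule ℂ A, IsLeftIdeal L'' → L'' ≠ ⊤ → L ≤ L'' → L'' = L := by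
      intro L'' hL''id hL''ne hLL''
      by_cases hIL'' : I ≤ L''
      · exfalso
        apply hL''ne
        rw [eq_top_iff]
        intro a _
        have h1 : a * e ∈ L'' := hL''id a e (hIL'' heI)
        have h2 : a * e - a ∈ L'' := hLL'' (hmodL a)
        simpa using L''.sub_mem h1 h2
      · have hNM : I ⊓ L'' = M := by
          apply hMmax
          · exact inf_le_left
          · intro a ha x hx
            obtain ⟨hx1, hx2⟩ := Submodule.mem_inf.mp hx
            exact Submodule.mem_inf.mpr ⟨(hI a x hx1).1, hL''id a x hx2⟩
          · exact fun h => hIL'' (inf_eq_left.mp h)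
          · rw [← hinf]; exact inf_le_inf_left I hLL''
        refine le_antisymm (fun a ha => mem_extIdeal.mpr fun b hb => ?_) hLL''
        rw [← hNM]
        exact Submodule.mem_inf.mpr ⟨(hI a b hb).2, hL''id b a ha⟩
    exact ⟨L, ⟨⟨hLid, ⟨e, hmodL⟩, hLne, hLmaxi⟩, hnotIL⟩, hinf⟩
end

section
/- Let A be a Banach algebra with a Gelfand theory (G, 𝔄), and let I be a closed ideal of A. Let 𝔍 be the intersection of all maximal modular left ideals L of 𝔄 with G(I) ⊆ L. Then 𝔍 is a two-sided closed ideal of 𝔄, and (G|_I, 𝔍) is a Gelfand theory for I. In particular, every closed ideal of a Banach algebra with a Gelfand theory has a Gelfand theory. -/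
set_option linter.unusedSectionVars false
set_option maxHeartbeats 1000000


open scoped Pointwise

section AlgebraicLemmas

variable {B : Type*} [NonUnitalRing B] [Module ℂ B] [IsScalarTower ℂ B B] [SMulCommClass ℂ B B]

/-- If a right modular identity of a proper left ideal lies in it, the ideal is everything. -/
lemma GThm_eq_top_of_unit_mem {L : Submodule ℂ B} (hld : IsLeftIdeal L)
    {u : B} (hu : ∀ b : B, b * u - b ∈ L) (hmem : u ∈ L) : L = ⊤ := by
  ext b
  simp only [Submodule.mem_top, iff_true]
  have h := L.sub_mem (hld b u hmem) (hu b)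
  simpa using h

/-- Key lemma: if `j ∈ J` is annihilated into `N` by left multiplication by all of `J`,
then `j ∈ N`, for `N` a maximal modular left ideal of `J`. -/
lemma GThm_mem_of_forall_mul_mem {J N : Submodule ℂ B}
    (hN : IsMaximalModularLeftIdealIn J N) {j : B} (hj : j ∈ J)
    (h : ∀ a ∈ J, a * j ∈ N) : j ∈ N := by
  by_contra hjN
  obtain ⟨hNJ, hNl, ⟨u, hu, humod⟩, hNne, hNmax⟩ := hN
  set N' := N ⊔ Submodule.span ℂ {j} with hN'def
  have hjN' : j ∈ N' := Submodule.mem_sup_right (Submodule.mem_span_singleton_self j)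
  have hN'J : N' ≤ J := sup_le hNJ ((Submodule.span_singleton_le_iff_mem _ _).2 hj)
  have hN'l : ∀ a ∈ J, ∀ x ∈ N', a * x ∈ N' := by
    intro a ha x hx
    rcases Submodule.mem_sup.1 hx with ⟨n, hn, s, hs, rfl⟩
    rcases Submodule.mem_span_singleton.1 hs with ⟨c, rfl⟩
    have hrw : a * (n + c • j) = a * n + c • (a * j) := by
      rw [mul_add, mul_smul_comm]
    rw [hrw]
    exact Submodule.mem_sup_left (N.add_mem (hNl a ha n hn) (N.smul_mem _ (h a ha)))
  by_cases hN'J' : N' = J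
  · -- then u ∈ N', so J ≤ N, contradiction
    have huN' : u ∈ N' := hN'J' ▸ hu
    rcases Submodule.mem_sup.1 huN' with ⟨n, hn, s, hs, hsum⟩
    rcases Submodule.mem_span_singleton.1 hs with ⟨c, rfl⟩
    have hJN : ∀ a ∈ J, a ∈ N := by
      intro a ha
      have h1 : a * u ∈ N := by
        rw [← hsum, mul_add, mul_smul_comm]
        exact N.add_mem (hNl a ha n hn) (N.smul_mem _ (h a ha))
      have h2 := N.sub_mem h1 (humod a ha)
      simpa using h2
    exact hNne (le_antisymm hNJ hJN)
  · have : N' = N := hNmax N' hN'J hN'l hN'J' le_sup_left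
    exact hjN (this ▸ hjN')

/-- A maximal modular left ideal of a two-sided ideal `J` is a left ideal of the whole ring. -/
lemma GThm_mul_mem_of_mmli_in {J N : Submodule ℂ B}
    (hJl : ∀ a x : B, x ∈ J → a * x ∈ J) (hJr : ∀ a x : B, x ∈ J → x * a ∈ J)
    (hN : IsMaximalModularLeftIdealIn J N) (b : B) {n : B} (hn : n ∈ N) :
    b * n ∈ N := by
  refine GThm_mem_of_forall_mul_mem hN (hJl b n (hN.1 hn)) fun a ha => ?_
  rw [← mul_assoc]
  exact hN.2.1 (a * b) (hJr b a ha) n hn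


/-- Extension of a maximal modular left ideal of a two-sided ideal `J` to the whole ring. -/
lemma GThm_extension {J N : Submodule ℂ B}
    (hJl : ∀ a x : B, x ∈ J → a * x ∈ J) (hJr : ∀ a x : B, x ∈ J → x * a ∈ J)
    (hN : IsMaximalModularLeftIdealIn J N)
    {u : B} (hu : u ∈ J) (humod : ∀ a ∈ J, a * u - a ∈ N) :
    IsMaximalModularLeftIdeal (N.comap (LinearMap.mulRight ℂ u)) ∧
      (N.comap (LinearMap.mulRight ℂ u)) ⊓ J = N ∧
      ∀ b : B, b * u - b ∈ N.comap (LinearMap.mulRight ℂ u) := by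
  set L := N.comap (LinearMap.mulRight ℂ u) with hLdef
  have hmemL : ∀ b : B, b ∈ L ↔ b * u ∈ N := fun b => Iff.rfl
  have hbleft : ∀ (b : B) {n : B}, n ∈ N → b * n ∈ N := fun b {n} hn =>
    GThm_mul_mem_of_mmli_in hJl hJr hN b hn
  have hLl : IsLeftIdeal L := by
    intro c b hb
    have : (c * b) * u = c * (b * u) := mul_assoc c b u
    rw [hmemL, this]
    exact hbleft c hb
  have hLmod : ∀ b : B, b * u - b ∈ L := by
    intro b
    rw [hmemL]
    have : (b * u - b) * u = b * (u * u - u) := by noncomm_ring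
    rw [this]
    exact hbleft b (humod u hu)
  have huu : u ∉ L := by
    intro huL
    rw [hmemL] at huL
    -- then J ≤ N
    have hJN : ∀ a ∈ J, a ∈ N := by
      intro a ha
      have h1 : a * (u * u) ∈ N := hN.2.1 a ha _ huL
      have h2 : (a * u) * u - (a * u) ∈ N := humod (a * u) (hJl a u hu)
      have h3 : a * u ∈ N := by
        have := N.sub_mem h1 h2
        rw [← mul_assoc] at this
        simpa using this
      have := N.sub_mem h3 (humod a ha)
      simpa using this
    exact hN.2.2.2.1 (le_antisymm hN.1 hJN)
  have hLtop : L ≠ ⊤ := fun h => huu (h ▸ Submodule.mem_top)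
  have hLinfJ : L ⊓ J = N := by
    apply le_antisymm
    · rintro b ⟨hbL, hbJ⟩
      have h1 : b * u ∈ N := hbL
      have h2 : b * u - b ∈ N := humod b hbJ
      have := N.sub_mem h1 h2
      simpa using this
    · intro n hn
      have h1 : n * u - n ∈ N := humod n (hN.1 hn)
      have h2 : n * u ∈ N := by simpa using N.add_mem h1 hn
      exact Submodule.mem_inf.2 ⟨h2, hN.1 hn⟩
  have hLmax : ∀ M : Submodule ℂ B, IsLeftIdeal M → M ≠ ⊤ → L ≤ M → M = L := by
    intro M hMl hMtop hLM
    set M₁ := N ⊔ Submodule.map (LinearMap.mulRight ℂ u) M with hM₁def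
    by_cases hM₁J : M₁ = J
    · exfalso
      have huM₁ : u ∈ M₁ := hM₁J ▸ hu
      rcases Submodule.mem_sup.1 huM₁ with ⟨n, hn, w, hw, hsum⟩
      rcases Submodule.mem_map.1 hw with ⟨d, hd, rfl⟩
      -- u = n + d * u
      have hsum' : n + d * u = u := by simpa using hsum
      have hn' : u - d * u = n := (eq_sub_of_add_eq hsum').symm
      apply hMtop
      ext c
      simp only [Submodule.mem_top, iff_true]
      have hc1 : c - c * d ∈ L := by
        rw [hmemL, sub_mul, mul_assoc, ← mul_sub, hn']
        exact hbleft c hn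
      have : (c - c * d) + c * d ∈ M := M.add_mem (hLM hc1) (hMl c d hd)
      simpa using this
    · have hM₁N : M₁ = N := by
        refine hN.2.2.2.2 M₁ ?_ ?_ hM₁J le_sup_left
        · refine sup_le hN.1 ?_
          rintro _ ⟨m, hm, rfl⟩
          exact hJl m u hu
        · intro a ha x hx
          rcases Submodule.mem_sup.1 hx with ⟨n, hn, w, hw, rfl⟩
          rcases Submodule.mem_map.1 hw with ⟨d, hd, rfl⟩
          have hrw : a * (n + (LinearMap.mulRight ℂ u) d) = a * n + (LinearMap.mulRight ℂ u) (a * d) := by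
            simp only [LinearMap.mulRight_apply]
            rw [mul_add, mul_assoc]
          rw [hrw]
          exact Submodule.add_mem _ (Submodule.mem_sup_left (hN.2.1 a ha n hn))
            (Submodule.mem_sup_right (Submodule.mem_map_of_mem (hMl a d hd)))
      apply le_antisymm _ hLM
      intro m hm
      rw [hmemL]
      have : m * u ∈ M₁ := Submodule.mem_sup_right (Submodule.mem_map_of_mem hm)
      rwa [hM₁N] at this
  exact ⟨⟨hLl, ⟨u, fun b => hLmod b⟩, hLtop, hLmax⟩, hLinfJ, hLmod⟩


/-- Restriction of a maximal modular left ideal to a two-sided ideal not contained in it. -/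
lemma GThm_restriction {J L : Submodule ℂ B}
    (hJl : ∀ a x : B, x ∈ J → a * x ∈ J) (hJr : ∀ a x : B, x ∈ J → x * a ∈ J)
    (hL : IsMaximalModularLeftIdeal L) (hJL : ¬ J ≤ L) :
    ∃ u ∈ J, (∀ b : B, b * u - b ∈ L) ∧ IsMaximalModularLeftIdealIn J (L ⊓ J) := by
  obtain ⟨hLl, ⟨u₀, hu₀⟩, hLtop, hLmax⟩ := hL
  have hsupl : IsLeftIdeal (L ⊔ J) := by
    intro a x hx
    rcases Submodule.mem_sup.1 hx with ⟨l, hl, j, hj, rfl⟩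
    rw [mul_add]
    exact Submodule.add_mem _ (Submodule.mem_sup_left (hLl a l hl))
      (Submodule.mem_sup_right (hJl a j hj))
  have hsuptop : L ⊔ J = ⊤ := by
    by_contra h
    exact hJL (le_sup_right.trans (hLmax _ hsupl h le_sup_left).le)
  have hu₀mem : u₀ ∈ L ⊔ J := hsuptop ▸ Submodule.mem_top
  rcases Submodule.mem_sup.1 hu₀mem with ⟨l, hl, u, hu, hsum⟩
  have humod : ∀ b : B, b * u - b ∈ L := by
    intro b
    have h1 : b * u₀ - b ∈ L := hu₀ b
    have h2 : b * u₀ = b * l + b * u := by rw [← mul_add, hsum]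
    have h3 : b * u - b = (b * u₀ - b) - b * l := by rw [h2]; abel
    rw [h3]
    exact L.sub_mem h1 (hLl b l hl)
  refine ⟨u, hu, humod, ?_, ?_, ⟨u, hu, fun a ha => ?_⟩, ?_, ?_⟩
  · exact inf_le_right
  · intro a ha x hx
    exact Submodule.mem_inf.2 ⟨hLl a x (Submodule.mem_inf.1 hx).1,
      hJl a x (Submodule.mem_inf.1 hx).2⟩
  · exact Submodule.mem_inf.2 ⟨humod a, J.sub_mem (hJr u a ha) ha⟩
  · intro h
    exact hJL fun x hx => (Submodule.mem_inf.1 (by rw [h]; exact hx)).1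
  · intro M hMJ hMl hMJ' hLJM
    have hML : M ≤ L := by
      by_contra hML
      obtain ⟨x, hxM, hxL⟩ := SetLike.not_le_iff_exists.1 hML
      set L' := (L ⊔ Submodule.span ℂ {x}) ⊔ Submodule.map (LinearMap.mulRight ℂ x) ⊤
        with hL'def
      have hLsub : L ≤ L' := le_sup_left.trans le_sup_left
      have hxL' : x ∈ L' :=
        Submodule.mem_sup_left (Submodule.mem_sup_right (Submodule.mem_span_singleton_self x))
      have hmulx : ∀ b : B, b * x ∈ L' := fun b =>
        Submodule.mem_sup_right (Submodule.mem_map_of_mem Submodule.mem_top)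
      have hL'l : IsLeftIdeal L' := by
        intro c y hy
        rcases Submodule.mem_sup.1 hy with ⟨z, hz, w, hw, rfl⟩
        rcases Submodule.mem_sup.1 hz with ⟨l₁, hl₁, s, hs, rfl⟩
        rcases Submodule.mem_span_singleton.1 hs with ⟨t, rfl⟩
        rcases Submodule.mem_map.1 hw with ⟨b, _, rfl⟩
        have hrw : c * ((l₁ + t • x) + (LinearMap.mulRight ℂ x) b)
            = c * l₁ + (t • c) * x + (c * b) * x := by
          simp only [LinearMap.mulRight_apply]
          rw [mul_add, mul_add, mul_smul_comm, smul_mul_assoc, mul_assoc]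
        rw [hrw]
        exact L'.add_mem (L'.add_mem (hLsub (hLl c l₁ hl₁)) (hmulx (t • c))) (hmulx (c * b))
      have hL'top : L' = ⊤ := by
        by_contra h
        exact hxL (hLmax L' hL'l h hLsub ▸ hxL')
      have huL' : u ∈ L' := hL'top ▸ Submodule.mem_top
      rcases Submodule.mem_sup.1 huL' with ⟨z, hz, w, hw, hsum'⟩
      rcases Submodule.mem_sup.1 hz with ⟨l₁, hl₁, s, hs, rfl⟩
      rcases Submodule.mem_span_singleton.1 hs with ⟨t, rfl⟩
      rcases Submodule.mem_map.1 hw with ⟨b, _, rfl⟩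
      -- u = l₁ + t • x + b * x
      have hJM : ∀ a ∈ J, a ∈ M := by
        intro a ha
        have h1 : a * u - a ∈ M := hLJM (Submodule.mem_inf.2
          ⟨humod a, J.sub_mem (hJr u a ha) ha⟩)
        have h2 : a * u ∈ M := by
          have hrw : a * u = a * l₁ + (t • a) * x + (a * b) * x := by
            rw [← hsum']
            simp only [LinearMap.mulRight_apply]
            rw [mul_add, mul_add, mul_smul_comm, smul_mul_assoc, mul_assoc]
          rw [hrw]
          refine M.add_mem (M.add_mem ?_ ?_) ?_
          · exact hLJM (Submodule.mem_inf.2 ⟨hLl a l₁ hl₁, hJr l₁ a ha⟩)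
          · have : t • a ∈ J := J.smul_mem t ha
            exact hMl _ this x hxM
          · exact hMl _ (hJr b a ha) x hxM
        have := M.sub_mem h2 h1
        simpa using this
      exact hMJ' (le_antisymm hMJ hJM)
    exact le_antisymm (fun m hm => Submodule.mem_inf.2 ⟨hML hm, hMJ hm⟩) hLJM

/-- Uniqueness of the extension. -/
lemma GThm_extension_unique {J L₁ L₂ : Submodule ℂ B}
    (hJl : ∀ a x : B, x ∈ J → a * x ∈ J) (hJr : ∀ a x : B, x ∈ J → x * a ∈ J)
    (h₁ : IsMaximalModularLeftIdeal L₁) (h₂ : IsMaximalModularLeftIdeal L₂)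
    (hJ₁ : ¬ J ≤ L₁) (hJ₂ : ¬ J ≤ L₂) (h : L₁ ⊓ J = L₂ ⊓ J) : L₁ = L₂ := by
  obtain ⟨u₁, hu₁J, hu₁, hN₁⟩ := GThm_restriction hJl hJr h₁ hJ₁
  obtain ⟨u₂, hu₂J, hu₂, hN₂⟩ := GThm_restriction hJl hJr h₂ hJ₂
  have hN : IsMaximalModularLeftIdealIn J (L₁ ⊓ J) := hN₁
  have hbleft : ∀ (b : B) {n : B}, n ∈ L₁ ⊓ J → b * n ∈ L₁ ⊓ J := fun b {n} hn =>
    GThm_mul_mem_of_mmli_in hJl hJr hN b hn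
  have hu₁mod : ∀ a ∈ J, a * u₁ - a ∈ L₁ ⊓ J := fun a ha =>
    Submodule.mem_inf.2 ⟨hu₁ a, J.sub_mem (hJr u₁ a ha) ha⟩
  have hu₂mod : ∀ a ∈ J, a * u₂ - a ∈ L₁ ⊓ J := fun a ha => by
    rw [h]
    exact Submodule.mem_inf.2 ⟨hu₂ a, J.sub_mem (hJr u₂ a ha) ha⟩
  have hdiff : u₁ - u₂ ∈ L₁ ⊓ J := by
    refine GThm_mem_of_forall_mul_mem hN (J.sub_mem hu₁J hu₂J) fun a ha => ?_
    have heq : a * (u₁ - u₂) = (a * u₁ - a) - (a * u₂ - a) := by rw [mul_sub]; abel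
    rw [heq]
    exact Submodule.sub_mem _ (hu₁mod a ha) (hu₂mod a ha)
  have hle : ∀ b ∈ L₁, b ∈ L₂ := by
    intro b hb
    have hbu₁ : b * u₁ ∈ L₁ ⊓ J := by
      refine Submodule.mem_inf.2 ⟨?_, hJl b u₁ hu₁J⟩
      have := L₁.add_mem (hu₁ b) hb
      simpa using this
    have hbu₂ : b * u₂ ∈ L₁ ⊓ J := by
      have hd : b * (u₁ - u₂) ∈ L₁ ⊓ J := hbleft b hdiff
      have heq : b * u₂ = b * u₁ - b * (u₁ - u₂) := by rw [mul_sub]; abel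
      rw [heq]
      exact Submodule.sub_mem _ hbu₁ hd
    have hbu₂L₂ : b * u₂ ∈ L₂ := by
      rw [h] at hbu₂
      exact (Submodule.mem_inf.1 hbu₂).1
    have := L₂.sub_mem hbu₂L₂ (hu₂ b)
    simpa using this
  have hge : ∀ b ∈ L₂, b ∈ L₁ := by
    intro b hb
    have hbu₂ : b * u₂ ∈ L₁ ⊓ J := by
      rw [h]
      refine Submodule.mem_inf.2 ⟨?_, hJl b u₂ hu₂J⟩
      have := L₂.add_mem (hu₂ b) hb
      simpa using this
    have hbu₁ : b * u₁ ∈ L₁ ⊓ J := by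
      have hd : b * (u₁ - u₂) ∈ L₁ ⊓ J := hbleft b hdiff
      have heq : b * u₁ = b * u₂ + b * (u₁ - u₂) := by rw [mul_sub]; abel
      rw [heq]
      exact Submodule.add_mem _ hbu₂ hd
    have hbu₁L₁ : b * u₁ ∈ L₁ := (Submodule.mem_inf.1 hbu₁).1
    have := L₁.sub_mem hbu₁L₁ (hu₁ b)
    simpa using this
  exact le_antisymm hle hge


/-- The annihilator `{b : b * c ∈ L}` of a vector `c ∉ L` is a maximal modular left ideal. -/
lemma GThm_ann_mmli {L : Submodule ℂ B} (hL : IsMaximalModularLeftIdeal L)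
    {c : B} (hc : c ∉ L) :
    IsMaximalModularLeftIdeal (L.comap (LinearMap.mulRight ℂ c)) := by
  obtain ⟨hLl, ⟨u₀, hu₀⟩, hLtop, hLmax⟩ := hL
  set La := L.comap (LinearMap.mulRight ℂ c) with hLadef
  have hmem : ∀ b : B, b ∈ La ↔ b * c ∈ L := fun b => Iff.rfl
  have hLal : IsLeftIdeal La := by
    intro a b hb
    rw [hmem, mul_assoc]
    exact hLl a _ hb
  -- ¬ (∀ b, b * c ∈ L)
  have hnotall : ¬ (∀ b : B, b * c ∈ L) := by
    intro hall
    have hKl : IsLeftIdeal (L ⊔ Submodule.span ℂ {c}) := by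
      intro a x hx
      rcases Submodule.mem_sup.1 hx with ⟨l, hl, s, hs, rfl⟩
      rcases Submodule.mem_span_singleton.1 hs with ⟨t, rfl⟩
      have hrw : a * (l + t • c) = a * l + (t • a) * c := by
        rw [mul_add, mul_smul_comm, smul_mul_assoc]
      rw [hrw]
      exact Submodule.mem_sup_left (L.add_mem (hLl a l hl) (hall (t • a)))
    have hKne : L ⊔ Submodule.span ℂ {c} ≠ L := by
      intro hK
      exact hc (hK ▸ Submodule.mem_sup_right (Submodule.mem_span_singleton_self c))
    have hKtop : L ⊔ Submodule.span ℂ {c} = ⊤ := by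
      by_contra hK
      exact hKne (hLmax _ hKl hK le_sup_left)
    have hu₀mem : u₀ ∈ L ⊔ Submodule.span ℂ {c} := hKtop ▸ Submodule.mem_top
    rcases Submodule.mem_sup.1 hu₀mem with ⟨l, hl, s, hs, hsum⟩
    rcases Submodule.mem_span_singleton.1 hs with ⟨t, rfl⟩
    apply hLtop
    ext b
    simp only [Submodule.mem_top, iff_true]
    have h1 : b * u₀ ∈ L := by
      rw [← hsum, mul_add, mul_smul_comm]
      exact L.add_mem (hLl b l hl) (L.smul_mem t (hall b))
    have := L.sub_mem h1 (hu₀ b)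
    simpa using this
  have hLatop : La ≠ ⊤ := by
    intro h
    exact hnotall fun b => (hmem b).1 (h ▸ Submodule.mem_top)
  -- modularity
  have hmod : IsModularLeft La := by
    set Kc := L ⊔ Submodule.map (LinearMap.mulRight ℂ c) ⊤ with hKcdef
    have hKcl : IsLeftIdeal Kc := by
      intro a x hx
      rcases Submodule.mem_sup.1 hx with ⟨l, hl, w, hw, rfl⟩
      rcases Submodule.mem_map.1 hw with ⟨b, _, rfl⟩
      have hrw : a * (l + (LinearMap.mulRight ℂ c) b)
          = a * l + (LinearMap.mulRight ℂ c) (a * b) := by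
        simp only [LinearMap.mulRight_apply]
        rw [mul_add, mul_assoc]
      rw [hrw]
      exact Submodule.add_mem _ (Submodule.mem_sup_left (hLl a l hl))
        (Submodule.mem_sup_right (Submodule.mem_map_of_mem Submodule.mem_top))
    by_cases hcKc : c ∈ Kc
    · rcases Submodule.mem_sup.1 hcKc with ⟨l, hl, w, hw, hsum⟩
      rcases Submodule.mem_map.1 hw with ⟨d, _, rfl⟩
      refine ⟨d, fun b => ?_⟩
      rw [hmem]
      have hdc : d * c - c = -l := by
        have h' : l + d * c = c := by simpa using hsum
        have h'' : c - d * c = l := sub_eq_of_eq_add h'.symm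
        rw [← h'']; abel
      have hrw : (b * d - b) * c = b * (d * c - c) := by
        rw [sub_mul, mul_assoc, mul_sub]
      rw [hrw, hdc]
      rw [mul_neg]
      exact L.neg_mem (hLl b l hl)
    · exfalso
      have hKcne : Kc ≠ ⊤ := fun h => hcKc (h ▸ Submodule.mem_top)
      have : Kc = L := hLmax _ hKcl hKcne le_sup_left
      apply hnotall
      intro b
      have : (LinearMap.mulRight ℂ c) b ∈ Kc :=
        Submodule.mem_sup_right (Submodule.mem_map_of_mem Submodule.mem_top)
      rw [‹Kc = L›] at this
      simpa using this
  -- maximality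
  have hmax : ∀ M : Submodule ℂ B, IsLeftIdeal M → M ≠ ⊤ → La ≤ M → M = La := by
    intro M hMl hMtop hLaM
    apply le_antisymm _ hLaM
    intro m hm
    rw [hmem]
    by_contra hmc
    set L'' := L ⊔ Submodule.map (LinearMap.mulRight ℂ c) M with hL''def
    have hL''l : IsLeftIdeal L'' := by
      intro a x hx
      rcases Submodule.mem_sup.1 hx with ⟨l, hl, w, hw, rfl⟩
      rcases Submodule.mem_map.1 hw with ⟨d, hd, rfl⟩
      have hrw : a * (l + (LinearMap.mulRight ℂ c) d)
          = a * l + (LinearMap.mulRight ℂ c) (a * d) := by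
        simp only [LinearMap.mulRight_apply]
        rw [mul_add, mul_assoc]
      rw [hrw]
      exact Submodule.add_mem _ (Submodule.mem_sup_left (hLl a l hl))
        (Submodule.mem_sup_right (Submodule.mem_map_of_mem (hMl a d hd)))
    have hL''top : L'' = ⊤ := by
      by_contra hne
      have : L'' = L := hLmax _ hL''l hne le_sup_left
      exact hmc (by
        have : (LinearMap.mulRight ℂ c) m ∈ L'' :=
          Submodule.mem_sup_right (Submodule.mem_map_of_mem hm)
        rw [‹L'' = L›] at this
        simpa using this)
    have hcL'' : c ∈ L'' := hL''top ▸ Submodule.mem_top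
    rcases Submodule.mem_sup.1 hcL'' with ⟨l, hl, w, hw, hsum⟩
    rcases Submodule.mem_map.1 hw with ⟨d, hd, rfl⟩
    have hdc : d * c - c = -l := by
      have h' : l + d * c = c := by simpa using hsum
      have h'' : c - d * c = l := sub_eq_of_eq_add h'.symm
      rw [← h'']; abel
    apply hMtop
    ext b
    simp only [Submodule.mem_top, iff_true]
    have h1 : b * d - b ∈ La := by
      rw [hmem]
      have hrw : (b * d - b) * c = b * (d * c - c) := by
        rw [sub_mul, mul_assoc, mul_sub]
      rw [hrw, hdc]
      rw [mul_neg]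
      exact L.neg_mem (hLl b l hl)
    have h2 : b * d ∈ M := hMl b d hd
    have := M.sub_mem h2 (hLaM h1)
    simpa using this
  exact ⟨hLal, hmod, hLatop, hmax⟩

end AlgebraicLemmas

section BanachLemmas

/-- Quasi-inverse of a small element in a complete non-unital normed ring. -/
lemma GThm_exists_quasi_inverse {R : Type*} [NonUnitalNormedRing R] [CompleteSpace R]
    {a : R} (ha : ‖a‖ < 1) : ∃ b : R, b + a - b * a = 0 := by
  set p : ℕ → R := fun n => (fun x => a * x)^[n] a with hpdef
  have hp0 : p 0 = a := rfl
  have hpsucc : ∀ n, p (n + 1) = a * p n := fun n => Function.iterate_succ_apply' _ _ _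
  have hnorm : ∀ n, ‖p n‖ ≤ ‖a‖ ^ (n + 1) := by
    intro n
    induction n with
    | zero => rw [hp0, pow_one]
    | succ n ih =>
      rw [hpsucc]
      calc ‖a * p n‖ ≤ ‖a‖ * ‖p n‖ := norm_mul_le _ _
        _ ≤ ‖a‖ * ‖a‖ ^ (n + 1) := by
            exact mul_le_mul_of_nonneg_left ih (norm_nonneg a)
        _ = ‖a‖ ^ (n + 1 + 1) := by ring
  have hsum : Summable p := by
    refine Summable.of_norm_bounded (g := fun n => ‖a‖ ^ (n + 1)) ?_ hnorm
    have h := (summable_geometric_of_lt_one (norm_nonneg a) ha).mul_left ‖a‖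
    refine h.congr fun n => ?_
    rw [← pow_succ']
  have hpa : ∀ n, p n * a = p (n + 1) := by
    intro n
    induction n with
    | zero => rw [hp0, hpsucc, hp0]
    | succ n ih => rw [hpsucc, mul_assoc, ih, ← hpsucc, hpsucc]
  refine ⟨-(∑' n, p n), ?_⟩
  have hmul : (∑' n, p n) * a = ∑' n, p n * a := (hsum.tsum_mul_right a).symm
  have hshift : ∑' n, p n * a = (∑' n, p n) - a := by
    have h1 : ∑' n, p n = p 0 + ∑' n, p (n + 1) := hsum.tsum_eq_zero_add
    have h2 : ∑' n, p n * a = ∑' n, p (n + 1) := by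
      exact tsum_congr hpa
    rw [h2, hp0] at *
    rw [h1]; abel
  rw [neg_mul, hmul, hshift]
  abel

end BanachLemmas

/-- Every maximal modular left ideal of a complete normed algebra is closed. -/
lemma GThm_mmli_isClosed {R : Type*} [NonUnitalNormedRing R] [NormedSpace ℂ R]
    [IsScalarTower ℂ R R] [SMulCommClass ℂ R R] [CompleteSpace R]
    {L : Submodule ℂ R} (hL : IsMaximalModularLeftIdeal L) : IsClosed (L : Set R) := by
  obtain ⟨hld, ⟨u, hu⟩, hne, hmax⟩ := hL
  have hclm : IsLeftIdeal L.topologicalClosure := by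
    intro a x hx
    have hcont : Continuous fun y : R => a * y := continuous_const.mul continuous_id
    have hmemcl : x ∈ closure (L : Set R) := by
      rw [← Submodule.topologicalClosure_coe]
      exact hx
    have h1 : a * x ∈ closure ((fun y : R => a * y) '' (L : Set R)) :=
      image_closure_subset_closure_image hcont ⟨x, hmemcl, rfl⟩
    have h2 : closure ((fun y : R => a * y) '' (L : Set R)) ⊆ closure (L : Set R) := by
      apply closure_mono
      rintro _ ⟨y, hy, rfl⟩
      exact hld a y hy
    have h3 : a * x ∈ closure (L : Set R) := h2 h1
    rw [← Submodule.topologicalClosure_coe] at h3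
    exact h3
  by_cases htop : L.topologicalClosure = ⊤
  · exfalso
    have hdense : Dense (L : Set R) := by
      have : (L.topologicalClosure : Set R) = Set.univ := by rw [htop]; rfl
      rw [Submodule.topologicalClosure_coe] at this
      rw [dense_iff_closure_eq, this]
    obtain ⟨x, hx, hdist⟩ : ∃ x ∈ (L : Set R), dist u x < 1 := by
      have := Metric.dense_iff.1 hdense u 1 one_pos
      obtain ⟨x, hx1, hx2⟩ := this
      exact ⟨x, hx2, (Metric.mem_ball'.1 hx1)⟩
    have hnorm : ‖u - x‖ < 1 := by rwa [dist_eq_norm] at hdist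
    obtain ⟨b, hb⟩ := GThm_exists_quasi_inverse hnorm
    -- b * (u - x) = b + (u - x)
    have hba : b * (u - x) = b + (u - x) := by
      have : b * (u - x) - (b + (u - x)) = -(b + (u - x) - b * (u - x)) := by abel
      have h0 : b + (u - x) - b * (u - x) = 0 := hb
      have := sub_eq_zero.1 (by rw [this, h0, neg_zero])
      exact this
    have h1 : b * u - b ∈ L := hu b
    have h2 : b * u = b * (u - x) + b * x := by rw [← mul_add]; congr 1; abel
    have h3 : u - x ∈ L := by
      have hx' : b * x ∈ L := hld b x hx
      have heq : (b * u - b) - b * x = u - x := by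
        rw [h2, hba]; abel
      rw [← heq]
      exact L.sub_mem h1 hx'
    have humem : u ∈ L := by
      have := L.add_mem h3 hx
      simpa using this
    exact hne (GThm_eq_top_of_unit_mem hld hu humem)
  · have heq : L.topologicalClosure = L :=
      hmax _ hclm htop L.le_topologicalClosure
    have : closure (L : Set R) = (L : Set R) := by
      rw [← Submodule.topologicalClosure_coe, heq]
    exact isClosed_of_closure_subset this.le

/-- Let `(G, 𝔄)` be a Gelfand theory for the Banach algebra `A`, let `I` be a closed
(two-sided) ideal of `A`, and let `𝔍` be the intersection of all maximal modular left
ideals `L` of `𝔄` with `G(I) ⊆ L`. Then `𝔍` is a closed two-sided ideal of `𝔄`,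
`G` maps `I` into `𝔍`, and `(G|_I, 𝔍)` is a Gelfand theory for `I`:
`L ↦ G⁻¹(L) ∩ I` is a bijection between the maximal modular left ideals of `𝔍` and those
of `I`, and for each maximal modular left ideal `L` of `𝔍` the induced map
`I/(G|_I)⁻¹(L) → 𝔍/L` has dense range (equivalently, `𝔍 ⊆ closure (G(I) + L)`). -/
theorem stmt_14 {A 𝔄 : Type*}
    [NonUnitalNormedRing A] [NormedSpace ℂ A] [IsScalarTower ℂ A A] [SMulCommClass ℂ A A]
    [CompleteSpace A]
    [NonUnitalNormedRing 𝔄] [StarRing 𝔄] [CStarRing 𝔄] [NormedSpace ℂ 𝔄]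
    [IsScalarTower ℂ 𝔄 𝔄] [SMulCommClass ℂ 𝔄 𝔄] [StarModule ℂ 𝔄] [CompleteSpace 𝔄]
    (G : A →ₙₐ[ℂ] 𝔄) (hG : IsGelfandTheory G)
    (I : Submodule ℂ A) (hI : ∀ a : A, ∀ x ∈ I, a * x ∈ I ∧ x * a ∈ I)
    (hIc : IsClosed (I : Set A)) :
    letI 𝔍 : Submodule ℂ 𝔄 :=
      sInf {L : Submodule ℂ 𝔄 | IsMaximalModularLeftIdeal L ∧ ∀ x ∈ I, G x ∈ L}
    (∀ a : 𝔄, ∀ x ∈ 𝔍, a * x ∈ 𝔍 ∧ x * a ∈ 𝔍) ∧ IsClosed (𝔍 : Set 𝔄) ∧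
      (∀ x ∈ I, G x ∈ 𝔍) ∧
      Set.BijOn (fun L : Submodule ℂ 𝔄 => Submodule.comap (G : A →ₗ[ℂ] 𝔄) L ⊓ I)
        {L | IsMaximalModularLeftIdealIn 𝔍 L} {M | IsMaximalModularLeftIdealIn I M} ∧
      ∀ L : Submodule ℂ 𝔄, IsMaximalModularLeftIdealIn 𝔍 L →
        (𝔍 : Set 𝔄) ⊆ closure (⇑G '' (I : Set A) + (L : Set 𝔄)) := by
  set S : Set (Submodule ℂ 𝔄) :=
    {L | IsMaximalModularLeftIdeal L ∧ ∀ x ∈ I, G x ∈ L} with hSdef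
  set 𝔍 : Submodule ℂ 𝔄 := sInf S with h𝔍def
  have hIl : ∀ a x : A, x ∈ I → a * x ∈ I := fun a x hx => (hI a x hx).1
  have hIr : ∀ a x : A, x ∈ I → x * a ∈ I := fun a x hx => (hI a x hx).2
  -- (a) G(I) * 𝔄 ⊆ L for every L ∈ S
  have hGIA : ∀ L ∈ S, ∀ i ∈ I, ∀ b : 𝔄, G i * b ∈ L := by
    intro L hL i hi b
    have hLc : IsClosed (L : Set 𝔄) := GThm_mmli_isClosed hL.1
    have hb : b ∈ closure (Set.range ⇑G + (L : Set 𝔄)) := (hG.2 L hL.1) b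
    have hcont : Continuous fun y : 𝔄 => G i * y := continuous_const.mul continuous_id
    have h1 : G i * b ∈ closure ((fun y : 𝔄 => G i * y) '' (Set.range ⇑G + ↑L)) :=
      image_closure_subset_closure_image hcont ⟨b, hb, rfl⟩
    have h2 : ((fun y : 𝔄 => G i * y) '' (Set.range ⇑G + ↑L)) ⊆ (L : Set 𝔄) := by
      rintro _ ⟨y, hy, rfl⟩
      rcases Set.mem_add.1 hy with ⟨g, hg, l, hl, rfl⟩
      rcases hg with ⟨a, rfl⟩
      show G i * (G a + l) ∈ L
      rw [mul_add, ← map_mul]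
      exact L.add_mem (hL.2 _ (hIr a i hi)) (hL.1.1 (G i) l hl)
    exact (IsClosed.closure_subset_iff hLc).2 h2 h1
  have hJleft : ∀ a x : 𝔄, x ∈ 𝔍 → a * x ∈ 𝔍 := by
    intro a x hx
    exact Submodule.mem_sInf.2 fun L hL => hL.1.1 a x (Submodule.mem_sInf.1 hx L hL)
  have hJright : ∀ a x : 𝔄, x ∈ 𝔍 → x * a ∈ 𝔍 := by
    intro b x hx
    refine Submodule.mem_sInf.2 fun L hL => ?_
    by_cases hbL : b ∈ L
    · exact hL.1.1 x b hbL
    · have hann := GThm_ann_mmli hL.1 hbL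
      have hannS : L.comap (LinearMap.mulRight ℂ b) ∈ S :=
        ⟨hann, fun i hi => show G i * b ∈ L from hGIA L hL i hi b⟩
      exact Submodule.mem_sInf.1 hx _ hannS
  have hJclosed : IsClosed (𝔍 : Set 𝔄) := by
    have hco : (𝔍 : Set 𝔄) = ⋂ L ∈ S, (L : Set 𝔄) := Submodule.coe_sInf S
    rw [hco]
    exact isClosed_biInter fun L hL => GThm_mmli_isClosed hL.1
  have hGIJ : ∀ x ∈ I, G x ∈ 𝔍 := fun x hx =>
    Submodule.mem_sInf.2 fun L hL => hL.2 x hx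
  -- the extension construction
  have hExt : ∀ N : Submodule ℂ 𝔄, IsMaximalModularLeftIdealIn 𝔍 N →
      ∃ L : Submodule ℂ 𝔄, IsMaximalModularLeftIdeal L ∧ L ⊓ 𝔍 = N ∧ ¬ 𝔍 ≤ L ∧
        (∃ u ∈ 𝔍, ∀ b : 𝔄, b * u - b ∈ L) ∧
        Submodule.comap (G : A →ₗ[ℂ] 𝔄) N ⊓ I = Submodule.comap (G : A →ₗ[ℂ] 𝔄) L ⊓ I ∧
        ¬ I ≤ Submodule.comap (G : A →ₗ[ℂ] 𝔄) L := by
    intro N hN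
    obtain ⟨u, hu, humod⟩ := hN.2.2.1
    obtain ⟨hL, hLJ, hLu⟩ := GThm_extension hJleft hJright hN hu humod
    set L := N.comap (LinearMap.mulRight ℂ u) with hLdef
    have h𝔍L : ¬ 𝔍 ≤ L := by
      intro hle
      have h1 : L ⊓ 𝔍 = 𝔍 := inf_eq_right.2 hle
      exact hN.2.2.2.1 (by rw [← hLJ, h1])
    have hLS : ¬ (∀ x ∈ I, G x ∈ L) := by
      intro hall
      exact h𝔍L (sInf_le (⟨hL, hall⟩ : L ∈ S))
    have hIcomap : I ≤ Submodule.comap (G : A →ₗ[ℂ] 𝔄) 𝔍 := fun x hx =>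
      Submodule.mem_comap.2 (hGIJ x hx)
    have hN_L : Submodule.comap (G : A →ₗ[ℂ] 𝔄) N ⊓ I
        = Submodule.comap (G : A →ₗ[ℂ] 𝔄) L ⊓ I := by
      conv_lhs => rw [← hLJ]
      rw [Submodule.comap_inf, inf_assoc]
      congr 1
      exact inf_eq_right.2 hIcomap
    have hIM : ¬ I ≤ Submodule.comap (G : A →ₗ[ℂ] 𝔄) L := fun h =>
      hLS fun x hx => Submodule.mem_comap.1 (h hx)
    exact ⟨L, hL, hLJ, h𝔍L, ⟨u, hu, hLu⟩, hN_L, hIM⟩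
  have hIcomap : I ≤ Submodule.comap (G : A →ₗ[ℂ] 𝔄) 𝔍 := fun x hx =>
    Submodule.mem_comap.2 (hGIJ x hx)
  refine ⟨fun a x hx => ⟨hJleft a x hx, hJright a x hx⟩, hJclosed, hGIJ, ⟨?_, ?_, ?_⟩, ?_⟩
  · -- MapsTo
    intro N hN
    obtain ⟨L, hL, hLJ, h𝔍L, _, hN_L, hIM⟩ := hExt N hN
    have hM : IsMaximalModularLeftIdeal (L.comap (G : A →ₗ[ℂ] 𝔄)) := hG.1.1 hL
    obtain ⟨e, he, hemod, hres⟩ := GThm_restriction hIl hIr hM hIM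
    show IsMaximalModularLeftIdealIn I (Submodule.comap (G : A →ₗ[ℂ] 𝔄) N ⊓ I)
    rw [hN_L]
    exact hres
  · -- InjOn
    intro N₁ hN₁ N₂ hN₂ heq
    obtain ⟨L₁, hL₁, hLJ₁, h𝔍L₁, _, hN_L₁, hIM₁⟩ := hExt N₁ hN₁
    obtain ⟨L₂, hL₂, hLJ₂, h𝔍L₂, _, hN_L₂, hIM₂⟩ := hExt N₂ hN₂
    have hM12 : Submodule.comap (G : A →ₗ[ℂ] 𝔄) L₁ ⊓ I
        = Submodule.comap (G : A →ₗ[ℂ] 𝔄) L₂ ⊓ I := by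
      rw [← hN_L₁, ← hN_L₂]
      exact heq
    have hMeq : Submodule.comap (G : A →ₗ[ℂ] 𝔄) L₁ = Submodule.comap (G : A →ₗ[ℂ] 𝔄) L₂ :=
      GThm_extension_unique hIl hIr (hG.1.1 hL₁) (hG.1.1 hL₂) hIM₁ hIM₂ hM12
    have hLeq : L₁ = L₂ := hG.1.2.1 hL₁ hL₂ hMeq
    rw [← hLJ₁, ← hLJ₂, hLeq]
  · -- SurjOn
    intro P hP
    obtain ⟨e, he, hemod⟩ := hP.2.2.1
    obtain ⟨hM, hMI, hMe⟩ := GThm_extension hIl hIr hP he hemod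
    set M := P.comap (LinearMap.mulRight ℂ e) with hMdef
    obtain ⟨L, hLmem, hLM⟩ := hG.1.2.2 (show M ∈ {L : Submodule ℂ A | IsMaximalModularLeftIdeal L} from hM)
    have hLmm : IsMaximalModularLeftIdeal L := hLmem
    have hLMeq : Submodule.comap (G : A →ₗ[ℂ] 𝔄) L = M := hLM
    have h𝔍L : ¬ 𝔍 ≤ L := by
      intro hle
      have hIM : I ≤ M := by
        rw [← hLMeq]
        intro x hx
        exact Submodule.mem_comap.2 (hle (hGIJ x hx))
      have h1 : M ⊓ I = I := inf_eq_right.2 hIM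
      rw [hMI] at h1
      exact hP.2.2.2.1 h1
    obtain ⟨u, hu, hLumod, hNres⟩ := GThm_restriction hJleft hJright hLmm h𝔍L
    refine ⟨L ⊓ 𝔍, hNres, ?_⟩
    show Submodule.comap (G : A →ₗ[ℂ] 𝔄) (L ⊓ 𝔍) ⊓ I = P
    rw [Submodule.comap_inf, inf_assoc, inf_eq_right.2 hIcomap, hLMeq, hMI]
  · -- density
    intro N hN
    obtain ⟨L, hL, hLJ, h𝔍L, ⟨u, hu𝔍, hLu⟩, hN_L, hIM⟩ := hExt N hN
    have hM : IsMaximalModularLeftIdeal (L.comap (G : A →ₗ[ℂ] 𝔄)) := hG.1.1 hL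
    set E := (Submodule.map (G : A →ₗ[ℂ] 𝔄) I ⊔ L).topologicalClosure with hEdef
    have hGE : ∀ c : A, ∀ y ∈ E, G c * y ∈ E := by
      intro c y hy
      have hcont : Continuous fun w : 𝔄 => G c * w := continuous_const.mul continuous_id
      have hy' : y ∈ closure ((Submodule.map (G : A →ₗ[ℂ] 𝔄) I ⊔ L : Submodule ℂ 𝔄) : Set 𝔄) := by
        rw [← Submodule.topologicalClosure_coe]
        exact hy
      have h1 : G c * y ∈ closure ((fun w : 𝔄 => G c * w) ''
          ((Submodule.map (G : A →ₗ[ℂ] 𝔄) I ⊔ L : Submodule ℂ 𝔄) : Set 𝔄)) :=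
        image_closure_subset_closure_image hcont ⟨y, hy', rfl⟩
      have h2 : ((fun w : 𝔄 => G c * w) ''
          ((Submodule.map (G : A →ₗ[ℂ] 𝔄) I ⊔ L : Submodule ℂ 𝔄) : Set 𝔄)) ⊆
          ((Submodule.map (G : A →ₗ[ℂ] 𝔄) I ⊔ L : Submodule ℂ 𝔄) : Set 𝔄) := by
        rintro _ ⟨w, hw, rfl⟩
        rcases Submodule.mem_sup.1 hw with ⟨g, hg, l, hl, rfl⟩
        rcases Submodule.mem_map.1 hg with ⟨i, hi, rfl⟩
        show G c * ((G : A →ₗ[ℂ] 𝔄) i + l) ∈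
          ((Submodule.map (G : A →ₗ[ℂ] 𝔄) I ⊔ L : Submodule ℂ 𝔄) : Set 𝔄)
        have hrw : G c * ((G : A →ₗ[ℂ] 𝔄) i + l) = G (c * i) + G c * l := by
          show G c * (G i + l) = G (c * i) + G c * l
          rw [mul_add, ← map_mul]
        rw [hrw]
        exact Submodule.add_mem _
          (Submodule.mem_sup_left (Submodule.mem_map_of_mem (hIl c i hi)))
          (Submodule.mem_sup_right (hL.1 (G c) l hl))
      have h3 : G c * y ∈ closure ((Submodule.map (G : A →ₗ[ℂ] 𝔄) I ⊔ L : Submodule ℂ 𝔄) : Set 𝔄) :=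
        closure_mono h2 h1
      rw [← Submodule.topologicalClosure_coe] at h3
      exact h3
    have hLE : L ≤ E := le_trans le_sup_right (Submodule.le_topologicalClosure _)
    have hK : ∀ a : A, G a ∈ E := by
      set K := E.comap (G : A →ₗ[ℂ] 𝔄) with hKdef
      have hKl : IsLeftIdeal K := by
        intro a x hx
        show G (a * x) ∈ E
        rw [map_mul]
        exact hGE a _ hx
      have hIK : I ≤ K := fun x hx =>
        show G x ∈ E from Submodule.le_topologicalClosure _
          (Submodule.mem_sup_left (Submodule.mem_map_of_mem hx))
      have hMK : L.comap (G : A →ₗ[ℂ] 𝔄) ≤ K := fun x hx =>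
        show G x ∈ E from hLE hx
      have hKne : K ≠ L.comap (G : A →ₗ[ℂ] 𝔄) := by
        intro h
        rw [h] at hIK
        exact hIM hIK
      have hKtop : K = ⊤ := by
        by_contra h
        exact hKne (hM.2.2.2 K hKl h hMK)
      intro a
      have : a ∈ K := hKtop ▸ Submodule.mem_top
      exact this
    have hEuniv : ∀ z : 𝔄, z ∈ E := by
      have hsub : Set.range ⇑G + (L : Set 𝔄) ⊆ (E : Set 𝔄) := by
        rintro _ ⟨g, hg, l, hl, rfl⟩
        rcases hg with ⟨a, rfl⟩
        exact E.add_mem (hK a) (hLE hl)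
      intro z
      have h1 : z ∈ closure (Set.range ⇑G + (L : Set 𝔄)) := (hG.2 L hL) z
      have h2 : closure (Set.range ⇑G + (L : Set 𝔄)) ⊆ closure (E : Set 𝔄) :=
        closure_mono hsub
      have h3 : closure (E : Set 𝔄) = (E : Set 𝔄) :=
        (Submodule.isClosed_topologicalClosure (Submodule.map (G : A →ₗ[ℂ] 𝔄) I ⊔ L)).closure_eq
      have h4 : z ∈ (E : Set 𝔄) := h3 ▸ h2 h1
      exact h4
    -- open mapping
    have hLclosed : IsClosed (L : Set 𝔄) := GThm_mmli_isClosed hL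
    have hsuptop : 𝔍 ⊔ L = ⊤ := by
      by_contra h
      have hsupl : IsLeftIdeal (𝔍 ⊔ L) := by
        intro a x hx
        rcases Submodule.mem_sup.1 hx with ⟨j, hj, l, hl, rfl⟩
        rw [mul_add]
        exact Submodule.add_mem _ (Submodule.mem_sup_left (hJleft a j hj))
          (Submodule.mem_sup_right (hL.1 a l hl))
      have heq := hL.2.2.2 (𝔍 ⊔ L) hsupl h le_sup_right
      exact h𝔍L (le_trans le_sup_left heq.le)
    haveI hc1 : CompleteSpace (↥𝔍) := hJclosed.completeSpace_coe
    haveI hc2 : CompleteSpace (↥L) := hLclosed.completeSpace_coe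
    set f : (↥𝔍 × ↥L) →L[ℂ] 𝔄 := (𝔍.subtypeL).coprod (L.subtypeL) with hfdef
    have hfsurj : Function.Surjective f := by
      intro z
      have hz : z ∈ 𝔍 ⊔ L := hsuptop ▸ Submodule.mem_top
      rcases Submodule.mem_sup.1 hz with ⟨j, hj, l, hl, hsum⟩
      exact ⟨(⟨j, hj⟩, ⟨l, hl⟩), hsum⟩
    obtain ⟨C, hC0, hCb⟩ := f.exists_preimage_norm_le hfsurj
    intro x hx
    have hx𝔍 : x ∈ 𝔍 := hx
    rw [Metric.mem_closure_iff]
    intro ε hε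
    set ε' := ε / (C + 1) with hε'def
    have hC1 : (0:ℝ) < C + 1 := add_pos hC0 one_pos
    have hε'pos : 0 < ε' := div_pos hε hC1
    have hxE : x ∈ closure ((Submodule.map (G : A →ₗ[ℂ] 𝔄) I ⊔ L : Submodule ℂ 𝔄) : Set 𝔄) := by
      rw [← Submodule.topologicalClosure_coe]
      exact hEuniv x
    obtain ⟨w, hw, hdistw⟩ := Metric.mem_closure_iff.1 hxE ε' hε'pos
    rcases Submodule.mem_sup.1 hw with ⟨g, hg, l₀, hl₀, hsum⟩
    rcases Submodule.mem_map.1 hg with ⟨i₀, hi₀, rfl⟩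
    have hwval : G i₀ + l₀ = w := hsum
    set z := x - w with hzdef
    have hznorm : ‖z‖ < ε' := by
      rw [hzdef, ← dist_eq_norm]
      exact hdistw
    obtain ⟨pq, hfz, hnz⟩ := hCb z
    obtain ⟨j', l'⟩ := pq
    have hzdecomp : (j' : 𝔄) + (l' : 𝔄) = z := hfz
    have hj'norm : ‖(j' : 𝔄)‖ ≤ C * ‖z‖ := le_trans (norm_fst_le (j', l')) hnz
    set n := x - G i₀ - (j' : 𝔄) with hndef
    have hn𝔍 : n ∈ 𝔍 := 𝔍.sub_mem (𝔍.sub_mem hx𝔍 (hGIJ i₀ hi₀)) j'.2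
    have hnL : n ∈ L := by
      have heqn : n = l₀ + (l' : 𝔄) := by
        rw [hndef]
        have hxw : x = w + z := by rw [hzdef]; abel
        rw [hxw, ← hwval, ← hzdecomp]
        abel
      rw [heqn]
      exact L.add_mem hl₀ l'.2
    have hnN : n ∈ N := by
      rw [← hLJ]
      exact Submodule.mem_inf.2 ⟨hnL, hn𝔍⟩
    refine ⟨G i₀ + n, ?_, ?_⟩
    · exact Set.add_mem_add (Set.mem_image_of_mem _ hi₀) hnN
    · have hxdiff : x - (G i₀ + n) = (j' : 𝔄) := by rw [hndef]; abel
      rw [dist_eq_norm, hxdiff]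
      calc ‖(j' : 𝔄)‖ ≤ C * ‖z‖ := hj'norm
        _ < C * ε' := by
            exact mul_lt_mul_of_pos_left hznorm hC0
        _ < ε := by
            rw [hε'def]
            have heqq : C * (ε / (C + 1)) = C * ε / (C + 1) := by ring
            rw [heqq, div_lt_iff₀ hC1]
            have h2 : ε * (C + 1) = C * ε + ε := by ring
            rw [h2]
            exact lt_add_of_pos_right _ hε
end

section
/- Let A be a C*-algebra, let (G, 𝔄) be a Gelfand theory for A, let L ∈ Λ_𝔄, and let a ∈ A be such that π_{G⁻¹(L)}(a) equals the rank one operator ξ ⊙ G_L*η on the Hilbert space A/G⁻¹(L), where ξ ∈ A/G⁻¹(L) and η ∈ 𝔄/L. Then π_L(G(a)) = G_L ξ ⊙ η. -/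
open scoped Pointwise

open scoped InnerProductSpace

/-- Rank-one behaviour of Gelfand transforms of C*-algebras. The Hilbert-space quotients
`A/G⁻¹(L)` and `𝔄/L` are modelled by Hilbert spaces `H`, `K` together with the (continuous)
quotient maps `q : A → H`, `Q : 𝔄 → K` (surjective, with kernels `G⁻¹(L)` and `L`), and
the induced map `𝒢L : H → K` (with `𝒢L ∘ q = Q ∘ G`, dense range). If
`π_{G⁻¹(L)}(a) = ξ ⊙ 𝒢L* η`, i.e. `q (a * x) = ⟪q x, 𝒢L* η⟫ • ξ` for all `x`, then
`π_L(G a) = 𝒢L ξ ⊙ η`, i.e. `Q (G a * y) = ⟪Q y, η⟫ • 𝒢L ξ` for all `y`. -/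
theorem stmt_16 {A 𝔄 : Type*}
    [NonUnitalNormedRing A] [StarRing A] [CStarRing A] [NormedSpace ℂ A]
    [IsScalarTower ℂ A A] [SMulCommClass ℂ A A] [StarModule ℂ A] [CompleteSpace A]
    [NonUnitalNormedRing 𝔄] [StarRing 𝔄] [CStarRing 𝔄] [NormedSpace ℂ 𝔄]
    [IsScalarTower ℂ 𝔄 𝔄] [SMulCommClass ℂ 𝔄 𝔄] [StarModule ℂ 𝔄] [CompleteSpace 𝔄]
    (G : A →ₙₐ[ℂ] 𝔄) (hG : IsGelfandTheory G)
    (L : Submodule ℂ 𝔄) (hL : IsMaximalModularLeftIdeal L)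
    {H K : Type*} [NormedAddCommGroup H] [InnerProductSpace ℂ H] [CompleteSpace H]
    [NormedAddCommGroup K] [InnerProductSpace ℂ K] [CompleteSpace K]
    (q : A →L[ℂ] H) (Q : 𝔄 →L[ℂ] K)
    (hqs : Function.Surjective ⇑q) (hQs : Function.Surjective ⇑Q)
    (hqker : ∀ x : A, q x = 0 ↔ G x ∈ L) (hQker : ∀ y : 𝔄, Q y = 0 ↔ y ∈ L)
    (TL : H →L[ℂ] K) (hGLq : ∀ x : A, TL (q x) = Q (G x)) (hGLd : DenseRange ⇑TL)
    (a : A) (ξ : H) (η : K)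
    (ha : ∀ x : A, q (a * x) = ⟪q x, ContinuousLinearMap.adjoint TL η⟫_ℂ • ξ) :
    ∀ y : 𝔄, Q (G a * y) = ⟪Q y, η⟫_ℂ • TL ξ := by
  have key : (fun y : 𝔄 => Q (G a * y)) = fun y : 𝔄 => ⟪Q y, η⟫_ℂ • TL ξ := by
    apply Continuous.ext_on (hG.2 L hL)
    · exact Q.continuous.comp (continuous_mul_left _)
    · exact ((Q.continuous.inner continuous_const)).smul continuous_const
    · rintro z ⟨u, ⟨x, rfl⟩, v, hv, rfl⟩
      have hQv : Q v = 0 := (hQker v).mpr hv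
      have hGav : Q (G a * v) = 0 := (hQker _).mpr (hL.1 _ _ hv)
      have h1 : G a * (G x + v) = G (a * x) + G a * v := by
        rw [mul_add, map_mul]
      simp only [h1, map_add, hGav, add_zero, hQv]
      rw [← hGLq, ha x, map_smul, ContinuousLinearMap.adjoint_inner_right, hGLq]
  exact fun y => congrFun key y
end
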